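/- arXiv:1802.09199 — 15 statements merged into one kernel-verified Lean document; each statement's English description precedes it below -/
import Mathlib

section
/- Let (Alo, Ahi) be an interval m×n matrix, (blo, bhi) an interval vector in ℝ^m, and (𝒜, β) a quantifier pattern. For every x ∈ ℝ^n: x is an AE-solution of the interval-quantifier system of equations A x = b (all rows are equalities) if and only if for every row i one has L_i(x) ≥ r_i and U_i(x) ≤ s_i. -/
open Finset

/-- A real matrix `A` lies in the interval matrix `(Alo, Ahi)`. -/
def memIM {m n : ℕ} (Alo Ahi A : Matrix (Fin m) (Fin n) ℝ) : Prop :=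
  ∀ i j, Alo i j ≤ A i j ∧ A i j ≤ Ahi i j

/-- A real vector `b` lies in the interval vector `(blo, bhi)`. -/
def memIV {m : ℕ} (blo bhi b : Fin m → ℝ) : Prop :=
  ∀ i, blo i ≤ b i ∧ b i ≤ bhi i

/-- `x` is an AE-solution of the interval-quantifier system `A x rel b`.
The quantifier pattern is given by `qA : Fin m → Fin n → Bool` and
`qb : Fin m → Bool`, where `true` stands for the label "∀" and `false`
for the label "∃". -/
def AESol {m n : ℕ} (Alo Ahi : Matrix (Fin m) (Fin n) ℝ) (blo bhi : Fin m → ℝ)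
    (qA : Fin m → Fin n → Bool) (qb : Fin m → Bool)
    (rel : Fin m → ℝ → ℝ → Prop) (x : Fin n → ℝ) : Prop :=
  ∀ A' b', memIM Alo Ahi A' → memIV blo bhi b' →
    ∃ A b, memIM Alo Ahi A ∧ memIV blo bhi b ∧
      (∀ i j, qA i j = true → A i j = A' i j) ∧
      (∀ i, qb i = true → b i = b' i) ∧
      ∀ i, rel i (∑ j, A i j * x j) (b i)

lemma mul_lb {lo hi t x : ℝ} (h1 : lo ≤ t) (h2 : t ≤ hi) :
    min (lo * x) (hi * x) ≤ t * x := by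
  rcases le_total 0 x with h | h
  · exact le_trans (min_le_left _ _) (by nlinarith)
  · exact le_trans (min_le_right _ _) (by nlinarith)

lemma mul_ub {lo hi t x : ℝ} (h1 : lo ≤ t) (h2 : t ≤ hi) :
    t * x ≤ max (lo * x) (hi * x) := by
  rcases le_total 0 x with h | h
  · exact le_trans (by nlinarith) (le_max_right _ _)
  · exact le_trans (by nlinarith) (le_max_left _ _)

/-- Matrix whose entries realize the minimum of `A i j * x j`. -/
noncomputable def AminM {m n : ℕ} (Alo Ahi : Matrix (Fin m) (Fin n) ℝ)
    (x : Fin n → ℝ) : Matrix (Fin m) (Fin n) ℝ :=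
  fun i j => if Alo i j * x j ≤ Ahi i j * x j then Alo i j else Ahi i j

/-- Matrix whose entries realize the maximum of `A i j * x j`. -/
noncomputable def AmaxM {m n : ℕ} (Alo Ahi : Matrix (Fin m) (Fin n) ℝ)
    (x : Fin n → ℝ) : Matrix (Fin m) (Fin n) ℝ :=
  fun i j => if Alo i j * x j ≤ Ahi i j * x j then Ahi i j else Alo i j

lemma AminM_mem {m n : ℕ} {Alo Ahi : Matrix (Fin m) (Fin n) ℝ}
    (hA : ∀ i j, Alo i j ≤ Ahi i j) (x : Fin n → ℝ) :
    memIM Alo Ahi (AminM Alo Ahi x) := by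
  intro i j
  unfold AminM
  split_ifs <;> exact ⟨by simp [hA i j], by simp [hA i j]⟩

lemma AmaxM_mem {m n : ℕ} {Alo Ahi : Matrix (Fin m) (Fin n) ℝ}
    (hA : ∀ i j, Alo i j ≤ Ahi i j) (x : Fin n → ℝ) :
    memIM Alo Ahi (AmaxM Alo Ahi x) := by
  intro i j
  unfold AmaxM
  split_ifs <;> exact ⟨by simp [hA i j], by simp [hA i j]⟩

lemma AminM_mul {m n : ℕ} (Alo Ahi : Matrix (Fin m) (Fin n) ℝ)
    (x : Fin n → ℝ) (i : Fin m) (j : Fin n) :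
    AminM Alo Ahi x i j * x j = min (Alo i j * x j) (Ahi i j * x j) := by
  unfold AminM
  split_ifs with h
  · rw [min_eq_left h]
  · rw [min_eq_right (le_of_not_ge h)]

lemma AmaxM_mul {m n : ℕ} (Alo Ahi : Matrix (Fin m) (Fin n) ℝ)
    (x : Fin n → ℝ) (i : Fin m) (j : Fin n) :
    AmaxM Alo Ahi x i j * x j = max (Alo i j * x j) (Ahi i j * x j) := by
  unfold AmaxM
  split_ifs with h
  · rw [max_eq_right h]
  · rw [max_eq_left (le_of_not_ge h)]

lemma convex_mem {lo hi a b μ : ℝ} (ha1 : lo ≤ a) (ha2 : a ≤ hi)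
    (hb1 : lo ≤ b) (hb2 : b ≤ hi) (h0 : 0 ≤ μ) (h1 : μ ≤ 1) :
    lo ≤ a + μ * (b - a) ∧ a + μ * (b - a) ≤ hi := by
  constructor <;> nlinarith [mul_nonneg h0 (sub_nonneg.mpr hb1),
    mul_nonneg (sub_nonneg.mpr h1) (sub_nonneg.mpr ha1),
    mul_nonneg h0 (sub_nonneg.mpr hb2),
    mul_nonneg (sub_nonneg.mpr h1) (sub_nonneg.mpr ha2),
    mul_nonneg h0 (sub_nonneg.mpr ((le_trans hb1 hb2))) ]

theorem stmt0 (m n : ℕ) (Alo Ahi : Matrix (Fin m) (Fin n) ℝ) (blo bhi : Fin m → ℝ)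
    (hA : ∀ i j, Alo i j ≤ Ahi i j) (hb : ∀ i, blo i ≤ bhi i)
    (qA : Fin m → Fin n → Bool) (qb : Fin m → Bool) (x : Fin n → ℝ) :
    AESol Alo Ahi blo bhi qA qb (fun _ a b => a = b) x ↔
    ∀ i,
      (∑ j, if qA i j then min (Alo i j * x j) (Ahi i j * x j)
              else max (Alo i j * x j) (Ahi i j * x j)) ≥ (if qb i then bhi i else blo i) ∧
      (∑ j, if qA i j then max (Alo i j * x j) (Ahi i j * x j)
              else min (Alo i j * x j) (Ahi i j * x j)) ≤ (if qb i then blo i else bhi i) := by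
  constructor
  · intro h i
    constructor
    · -- choose adversary A' = AminM, b' = bhi
      obtain ⟨A, b, hAm, hbm, hAeq, hbeq, heq⟩ :=
        h (AminM Alo Ahi x) bhi (AminM_mem hA x) (fun i => ⟨hb i, le_refl _⟩)
      have h1 : ∑ j, A i j * x j ≤
          ∑ j, (if qA i j then min (Alo i j * x j) (Ahi i j * x j)
              else max (Alo i j * x j) (Ahi i j * x j)) := by
        apply Finset.sum_le_sum
        intro j _
        by_cases hq : qA i j
        · simp only [hq, if_true]
          rw [hAeq i j hq, AminM_mul]
        · simp only [hq, Bool.false_eq_true, if_false]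
          exact mul_ub (hAm i j).1 (hAm i j).2
      have h2 : (∑ j, A i j * x j) = b i := heq i
      by_cases hqb : qb i
      · simp only [hqb, if_true]
        have := hbeq i hqb
        linarith [h1, h2.symm ▸ (le_of_eq this.symm)]
      · simp only [hqb, Bool.false_eq_true, if_false]
        have := (hbm i).1
        linarith
    · -- choose adversary A' = AmaxM, b' = blo
      obtain ⟨A, b, hAm, hbm, hAeq, hbeq, heq⟩ :=
        h (AmaxM Alo Ahi x) blo (AmaxM_mem hA x) (fun i => ⟨le_refl _, hb i⟩)
      have h1 : (∑ j, if qA i j then max (Alo i j * x j) (Ahi i j * x j)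
              else min (Alo i j * x j) (Ahi i j * x j)) ≤ ∑ j, A i j * x j := by
        apply Finset.sum_le_sum
        intro j _
        by_cases hq : qA i j
        · simp only [hq, if_true]
          rw [hAeq i j hq, AmaxM_mul]
        · simp only [hq, Bool.false_eq_true, if_false]
          exact mul_lb (hAm i j).1 (hAm i j).2
      have h2 : (∑ j, A i j * x j) = b i := heq i
      by_cases hqb : qb i
      · simp only [hqb, if_true]
        have := hbeq i hqb
        linarith
      · simp only [hqb, Bool.false_eq_true, if_false]
        have := (hbm i).2
        linarith
  · intro h A' b' hA'm hb'm
    set Lo : Fin m → ℝ := fun i => ∑ j, if qA i j then A' i j * x j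
        else min (Alo i j * x j) (Ahi i j * x j) with hLo
    set Hi : Fin m → ℝ := fun i => ∑ j, if qA i j then A' i j * x j
        else max (Alo i j * x j) (Ahi i j * x j) with hHi
    set p : Fin m → ℝ := fun i => if qb i then b' i else blo i with hp
    set q : Fin m → ℝ := fun i => if qb i then b' i else bhi i with hq
    have hLoHi : ∀ i, Lo i ≤ Hi i := by
      intro i
      apply Finset.sum_le_sum
      intro j _
      by_cases hqa : qA i j <;> simp [hqa, min_le_max]
    -- r ≤ Hi i
    have hrHi : ∀ i, (if qb i then bhi i else blo i) ≤ Hi i := by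
      intro i
      refine le_trans (h i).1 ?_
      apply Finset.sum_le_sum
      intro j _
      by_cases hqa : qA i j
      · simp only [hqa, if_true]
        exact mul_lb (hA'm i j).1 (hA'm i j).2
      · simp [hqa]
    -- Lo i ≤ s
    have hLos : ∀ i, Lo i ≤ (if qb i then blo i else bhi i) := by
      intro i
      refine le_trans ?_ (h i).2
      apply Finset.sum_le_sum
      intro j _
      by_cases hqa : qA i j
      · simp only [hqa, if_true]
        exact mul_ub (hA'm i j).1 (hA'm i j).2
      · simp [hqa]
    have hpq : ∀ i, p i ≤ q i := by
      intro i; by_cases hqb : qb i <;> simp [hp, hq, hqb, hb i]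
    have hpHi : ∀ i, p i ≤ Hi i := by
      intro i
      have := hrHi i
      by_cases hqb : qb i <;> simp only [hp, hqb, if_true, Bool.false_eq_true, if_false] at this ⊢
      · exact le_trans (hb'm i).2 this
      · exact this
    have hLoq : ∀ i, Lo i ≤ q i := by
      intro i
      have := hLos i
      by_cases hqb : qb i <;> simp only [hq, hqb, if_true, Bool.false_eq_true, if_false] at this ⊢
      · exact le_trans this (hb'm i).1
      · exact this
    set t : Fin m → ℝ := fun i => max (Lo i) (p i) with ht
    have hLot : ∀ i, Lo i ≤ t i := fun i => le_max_left _ _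
    have hpt : ∀ i, p i ≤ t i := fun i => le_max_right _ _
    have htHi : ∀ i, t i ≤ Hi i := fun i => max_le (hLoHi i) (hpHi i)
    have htq : ∀ i, t i ≤ q i := fun i => max_le (hLoq i) (hpq i)
    set μ : Fin m → ℝ := fun i => if Hi i = Lo i then 0
        else (t i - Lo i) / (Hi i - Lo i) with hμ
    have hμ0 : ∀ i, 0 ≤ μ i := by
      intro i
      simp only [hμ]
      split_ifs with he
      · exact le_refl 0
      · have hpos : 0 < Hi i - Lo i := by
          have := lt_of_le_of_ne (hLoHi i) (Ne.symm he)
          linarith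
        exact div_nonneg (by linarith [hLot i]) (le_of_lt hpos)
    have hμ1 : ∀ i, μ i ≤ 1 := by
      intro i
      simp only [hμ]
      split_ifs with he
      · norm_num
      · have hpos : 0 < Hi i - Lo i := by
          have := lt_of_le_of_ne (hLoHi i) (Ne.symm he)
          linarith
        rw [div_le_one hpos]
        linarith [htHi i]
    have hμeq : ∀ i, Lo i + μ i * (Hi i - Lo i) = t i := by
      intro i
      simp only [hμ]
      split_ifs with he
      · have h1 := hLot i
        have h2 := htHi i
        rw [he] at h2
        linarith
      · have hpos : Hi i - Lo i ≠ 0 := by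
          intro hc
          exact he (by linarith [sub_eq_zero.mp hc])
        field_simp
        ring
    set Amat : Matrix (Fin m) (Fin n) ℝ := fun i j => if qA i j then A' i j
        else AminM Alo Ahi x i j + μ i * (AmaxM Alo Ahi x i j - AminM Alo Ahi x i j)
        with hAmat
    have hAmatmem : memIM Alo Ahi Amat := by
      intro i j
      simp only [hAmat]
      split_ifs with hqa
      · exact hA'm i j
      · exact convex_mem (AminM_mem hA x i j).1 (AminM_mem hA x i j).2
          (AmaxM_mem hA x i j).1 (AmaxM_mem hA x i j).2 (hμ0 i) (hμ1 i)
    have hsum : ∀ i, ∑ j, Amat i j * x j = t i := by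
      intro i
      rw [← hμeq i]
      have e1 : Lo i + μ i * (Hi i - Lo i) =
          ∑ j, ((if qA i j then A' i j * x j else min (Alo i j * x j) (Ahi i j * x j))
            + μ i * ((if qA i j then A' i j * x j else max (Alo i j * x j) (Ahi i j * x j))
              - (if qA i j then A' i j * x j else min (Alo i j * x j) (Ahi i j * x j)))) := by
        rw [Finset.sum_add_distrib, ← Finset.mul_sum, ← Finset.sum_sub_distrib]
      rw [e1]
      refine Finset.sum_congr rfl fun j _ => ?_
      simp only [hAmat]
      by_cases hqa : qA i j
      · simp [hqa]
      · simp only [hqa, Bool.false_eq_true, if_false]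
        rw [add_mul, mul_assoc, sub_mul, AminM_mul, AmaxM_mul]
    refine ⟨Amat, t, hAmatmem, ?_, ?_, ?_, ?_⟩
    · intro i
      constructor
      · refine le_trans ?_ (hpt i)
        by_cases hqb : qb i <;> simp [hp, hqb, (hb'm i).1]
      · refine le_trans (htq i) ?_
        by_cases hqb : qb i <;> simp [hq, hqb, (hb'm i).2]
    · intro i j hqa
      simp [hAmat, hqa]
    · intro i hqb
      have h1 : p i = b' i := by simp [hp, hqb]
      have h2 : q i = b' i := by simp [hq, hqb]
      have := htq i
      rw [h2] at this
      have := hpt i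
      rw [h1] at this
      exact le_antisymm (h2 ▸ htq i) this
    · exact hsum
end

section
/- Let (Alo, Ahi) be an interval m×n matrix, (blo, bhi) an interval vector in ℝ^m, and (𝒜, β) a quantifier pattern. For every x ∈ ℝ^n: x is an AE-solution of the interval-quantifier system of inequalities A x ≥ b (all rows are '≥') if and only if for every row i one has L_i(x) ≥ r_i. -/
open Finset

theorem stmt1 (m n : ℕ) (Alo Ahi : Matrix (Fin m) (Fin n) ℝ) (blo bhi : Fin m → ℝ)
    (hA : ∀ i j, Alo i j ≤ Ahi i j) (hb : ∀ i, blo i ≤ bhi i)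
    (qA : Fin m → Fin n → Bool) (qb : Fin m → Bool) (x : Fin n → ℝ) :
    AESol Alo Ahi blo bhi qA qb (fun _ a b => a ≥ b) x ↔
    ∀ i,
      (∑ j, if qA i j then min (Alo i j * x j) (Ahi i j * x j)
              else max (Alo i j * x j) (Ahi i j * x j)) ≥ (if qb i then bhi i else blo i) := by
  have key : ∀ lo hi t y : ℝ, lo ≤ t → t ≤ hi →
      min (lo * y) (hi * y) ≤ t * y ∧ t * y ≤ max (lo * y) (hi * y) := by
    intro lo hi t y h1 h2
    rcases le_total 0 y with hy | hy
    · exact ⟨(min_le_left _ _).trans (mul_le_mul_of_nonneg_right h1 hy),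
        (mul_le_mul_of_nonneg_right h2 hy).trans (le_max_right _ _)⟩
    · exact ⟨(min_le_right _ _).trans (mul_le_mul_of_nonpos_right h2 hy),
        (mul_le_mul_of_nonpos_right h1 hy).trans (le_max_left _ _)⟩
  constructor
  · intro hsol i
    -- worst-case choices
    set A' : Matrix (Fin m) (Fin n) ℝ :=
      fun i j => if Alo i j * x j ≤ Ahi i j * x j then Alo i j else Ahi i j with hA'
    have hA'mem : memIM Alo Ahi A' := by
      intro i j
      by_cases h : Alo i j * x j ≤ Ahi i j * x j <;>
        simp [hA', h, hA i j]
    have hA'min : ∀ i j, A' i j * x j = min (Alo i j * x j) (Ahi i j * x j) := by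
      intro i j
      by_cases h : Alo i j * x j ≤ Ahi i j * x j
      · simp [hA', h, min_eq_left h]
      · simp [hA', h, min_eq_right (le_of_not_ge h)]
    obtain ⟨A, b, hAm, hbm, hAq, hbq, hrel⟩ := hsol A' bhi hA'mem (fun i => ⟨hb i, le_refl _⟩)
    have h1 : (∑ j, if qA i j then min (Alo i j * x j) (Ahi i j * x j)
        else max (Alo i j * x j) (Ahi i j * x j)) ≥ ∑ j, A i j * x j := by
      apply Finset.sum_le_sum
      intro j _
      by_cases h : qA i j
      · rw [if_pos h, ← hA'min i j, hAq i j h]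
      · rw [if_neg h]
        exact (key _ _ _ _ (hAm i j).1 (hAm i j).2).2
    refine le_trans ?_ (le_trans (hrel i) h1)
    by_cases h : qb i
    · rw [if_pos h, ← hbq i h]
    · rw [if_neg h]
      exact (hbm i).1
  · intro hineq A' b' hA'm hb'm
    refine ⟨fun i j => if qA i j then A' i j
        else if Alo i j * x j ≤ Ahi i j * x j then Ahi i j else Alo i j,
      fun i => if qb i then b' i else blo i, ?_, ?_, ?_, ?_, ?_⟩
    · intro i j
      by_cases h : qA i j
      · simpa [h] using hA'm i j
      · by_cases h2 : Alo i j * x j ≤ Ahi i j * x j <;>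
          simp [h, h2, hA i j]
    · intro i
      by_cases h : qb i
      · simpa [h] using hb'm i
      · simp [h, hb i]
    · intro i j h; simp [h]
    · intro i h; simp [h]
    · intro i
      have h1 : (∑ j, (if qA i j then A' i j
          else if Alo i j * x j ≤ Ahi i j * x j then Ahi i j else Alo i j) * x j)
          ≥ ∑ j, if qA i j then min (Alo i j * x j) (Ahi i j * x j)
              else max (Alo i j * x j) (Ahi i j * x j) := by
        apply Finset.sum_le_sum
        intro j _
        by_cases h : qA i j
        · rw [if_pos h, if_pos h]
          exact (key _ _ _ _ (hA'm i j).1 (hA'm i j).2).1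
        · rw [if_neg h, if_neg h]
          by_cases h2 : Alo i j * x j ≤ Ahi i j * x j
          · rw [if_pos h2, max_eq_right h2]
          · rw [if_neg h2, max_eq_left (le_of_not_ge h2)]
      refine le_trans ?_ (le_trans (hineq i) h1)
      by_cases h : qb i
      · simp only [h, if_pos]; exact (hb'm i).2
      · simp [h]
end

section
/- Let (Alo, Ahi) be an interval m×n matrix, (blo, bhi) an interval vector in ℝ^m, and (𝒜, β) a quantifier pattern. For every x ∈ ℝ^n: x is an AE-solution of the interval-quantifier system of inequalities A x ≤ b (all rows are '≤') if and only if for every row i one has U_i(x) ≤ s_i. -/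
open Finset

lemma mul_le_max' {lo hi t c : ℝ} (h1 : lo ≤ t) (h2 : t ≤ hi) :
    t * c ≤ max (lo * c) (hi * c) := by
  rcases le_total 0 c with hc | hc
  · exact le_max_of_le_right (by nlinarith)
  · exact le_max_of_le_left (by nlinarith)

lemma min_le_mul' {lo hi t c : ℝ} (h1 : lo ≤ t) (h2 : t ≤ hi) :
    min (lo * c) (hi * c) ≤ t * c := by
  rcases le_total 0 c with hc | hc
  · exact min_le_of_left_le (by nlinarith)
  · exact min_le_of_right_le (by nlinarith)

theorem stmt2 (m n : ℕ) (Alo Ahi : Matrix (Fin m) (Fin n) ℝ) (blo bhi : Fin m → ℝ)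
    (hA : ∀ i j, Alo i j ≤ Ahi i j) (hb : ∀ i, blo i ≤ bhi i)
    (qA : Fin m → Fin n → Bool) (qb : Fin m → Bool) (x : Fin n → ℝ) :
    AESol Alo Ahi blo bhi qA qb (fun _ a b => a ≤ b) x ↔
    ∀ i,
      (∑ j, if qA i j then max (Alo i j * x j) (Ahi i j * x j)
              else min (Alo i j * x j) (Ahi i j * x j)) ≤ (if qb i then blo i else bhi i) := by
  constructor
  · intro h i
    -- worst-case A' and b'
    set A' : Matrix (Fin m) (Fin n) ℝ :=
      fun r j => if Ahi r j * x j ≤ Alo r j * x j then Alo r j else Ahi r j with hA'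
    have hA'mem : memIM Alo Ahi A' := by
      intro r j
      simp only [hA', Matrix.of_apply]
      split <;> constructor <;> first | rfl | exact hA r j
    have hA'max : ∀ r j, A' r j * x j = max (Alo r j * x j) (Ahi r j * x j) := by
      intro r j
      simp only [hA']
      split_ifs with hcase
      · exact (max_eq_left hcase).symm
      · exact (max_eq_right (le_of_not_ge hcase)).symm
    have hb'mem : memIV blo bhi blo := fun r => ⟨le_refl _, hb r⟩
    obtain ⟨A, b, hAmem, hbmem, hAeq, hbeq, hle⟩ := h A' blo hA'mem hb'mem
    have key : (∑ j, if qA i j then max (Alo i j * x j) (Ahi i j * x j)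
        else min (Alo i j * x j) (Ahi i j * x j)) ≤ ∑ j, A i j * x j := by
      apply Finset.sum_le_sum
      intro j _
      by_cases hq : qA i j
      · simp only [hq, if_true]
        rw [← hA'max i j, hAeq i j hq]
      · simp only [hq, if_false]
        exact min_le_mul' (hAmem i j).1 (hAmem i j).2
    have hbi : b i ≤ if qb i then blo i else bhi i := by
      by_cases hq : qb i
      · simp only [hq, if_true]
        rw [hbeq i hq]
      · simp only [hq, if_false]
        exact (hbmem i).2
    exact le_trans key (le_trans (hle i) hbi)
  · intro h A' b' hA'mem hb'mem
    refine ⟨fun r j => if qA r j then A' r j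
        else (if Alo r j * x j ≤ Ahi r j * x j then Alo r j else Ahi r j),
      fun r => if qb r then b' r else bhi r, ?_, ?_, ?_, ?_, ?_⟩
    · intro r j
      dsimp only
      split_ifs with hq hc
      · exact hA'mem r j
      · exact ⟨le_refl _, hA r j⟩
      · exact ⟨hA r j, le_refl _⟩
    · intro r
      by_cases hq : qb r
      · simpa [hq] using hb'mem r
      · simp [hq, hb r]
    · intro r j hq; simp [hq]
    · intro r hq; simp [hq]
    · intro r
      have key : (∑ j, (if qA r j then A' r j
          else (if Alo r j * x j ≤ Ahi r j * x j then Alo r j else Ahi r j)) * x j) ≤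
          ∑ j, if qA r j then max (Alo r j * x j) (Ahi r j * x j)
            else min (Alo r j * x j) (Ahi r j * x j) := by
        apply Finset.sum_le_sum
        intro j _
        split_ifs with hq hc
        · exact mul_le_max' (hA'mem r j).1 (hA'mem r j).2
        · exact (min_eq_left hc).ge
        · exact (min_eq_right (le_of_not_ge hc)).ge
      have hs : (if qb r then blo r else bhi r) ≤ (if qb r then b' r else bhi r) := by
        by_cases hq : qb r
        · simp [hq, (hb'mem r).1]
        · simp [hq]
      exact le_trans key (le_trans (h r) hs)
end

section
/- For interval systems of linear inequalities A x ≥ b, the order of the quantifiers does not matter: for every x ∈ ℝ^n, x is an AE-solution of A x ≥ b (universal parameters quantified first) if and only if x is an EA-solution of A x ≥ b (existential parameters quantified first), for the same interval data (Alo, Ahi, blo, bhi) and the same quantifier pattern (𝒜, β). -/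
open Finset

/-- `x` is an EA-solution: the existentially quantified parameters are chosen
first, then for every choice of the universally quantified parameters the
combined matrix/vector must satisfy the relations. -/
def EASol {m n : ℕ} (Alo Ahi : Matrix (Fin m) (Fin n) ℝ) (blo bhi : Fin m → ℝ)
    (qA : Fin m → Fin n → Bool) (qb : Fin m → Bool)
    (rel : Fin m → ℝ → ℝ → Prop) (x : Fin n → ℝ) : Prop :=
  ∃ A b, memIM Alo Ahi A ∧ memIV blo bhi b ∧
    ∀ A' b', memIM Alo Ahi A' → memIV blo bhi b' →
      ∀ i, rel i (∑ j, (if qA i j then A' i j else A i j) * x j)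
               (if qb i then b' i else b i)

theorem stmt3 (m n : ℕ) (Alo Ahi : Matrix (Fin m) (Fin n) ℝ) (blo bhi : Fin m → ℝ)
    (hA : ∀ i j, Alo i j ≤ Ahi i j) (hb : ∀ i, blo i ≤ bhi i)
    (qA : Fin m → Fin n → Bool) (qb : Fin m → Bool) (x : Fin n → ℝ) :
    AESol Alo Ahi blo bhi qA qb (fun _ a b => a ≥ b) x ↔
    EASol Alo Ahi blo bhi qA qb (fun _ a b => a ≥ b) x := by
  constructor
  · intro hAE
    -- worst-case universal choice
    set A0 : Matrix (Fin m) (Fin n) ℝ := fun i j => if 0 ≤ x j then Alo i j else Ahi i j with hA0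
    have hA0mem : memIM Alo Ahi A0 := by
      intro i j
      by_cases h : 0 ≤ x j <;> simp [hA0, h, hA i j]
    have hb0mem : memIV blo bhi bhi := fun i => ⟨hb i, le_refl _⟩
    obtain ⟨A, b, hAmem, hbmem, hAeq, hbeq, hineq⟩ := hAE A0 bhi hA0mem hb0mem
    refine ⟨A, b, hAmem, hbmem, ?_⟩
    intro A' b' hA'mem hb'mem i
    have hsum : ∑ j, (if qA i j then A' i j else A i j) * x j ≥ ∑ j, A i j * x j := by
      apply Finset.sum_le_sum
      intro j _
      by_cases h : qA i j
      · simp only [h, if_true]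
        have hAij : A i j = A0 i j := hAeq i j h
        rw [hAij, hA0]
        by_cases hx : 0 ≤ x j
        · simp only [hx, if_true]
          exact mul_le_mul_of_nonneg_right (hA'mem i j).1 hx
        · simp only [hx, if_false]
          exact mul_le_mul_of_nonpos_right (hA'mem i j).2 (le_of_not_ge hx)
      · simp [h]
    have hrhs : (if qb i then b' i else b i) ≤ b i := by
      by_cases h : qb i
      · simp only [h, if_true]
        calc b' i ≤ bhi i := (hb'mem i).2
          _ = b i := (hbeq i h).symm
      · simp [h]
    exact le_trans hrhs (le_trans (hineq i) hsum)
  · intro ⟨A, b, hAmem, hbmem, h⟩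
    intro A' b' hA'mem hb'mem
    refine ⟨fun i j => if qA i j then A' i j else A i j,
            fun i => if qb i then b' i else b i, ?_, ?_, ?_, ?_, ?_⟩
    · intro i j; by_cases hq : qA i j <;> simp [hq, hA'mem i j, hAmem i j]
    · intro i; by_cases hq : qb i <;> simp [hq, hb'mem i, hbmem i]
    · intro i j hq; simp [hq]
    · intro i hq; simp [hq]
    · exact h A' b' hA'mem hb'mem
end

section
/- For interval systems of linear inequalities A x ≤ b, the order of the quantifiers does not matter: for every x ∈ ℝ^n, x is an AE-solution of A x ≤ b (universal parameters quantified first) if and only if x is an EA-solution of A x ≤ b (existential parameters quantified first), for the same interval data (Alo, Ahi, blo, bhi) and the same quantifier pattern (𝒜, β). -/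
open Finset

theorem stmt4 (m n : ℕ) (Alo Ahi : Matrix (Fin m) (Fin n) ℝ) (blo bhi : Fin m → ℝ)
    (hA : ∀ i j, Alo i j ≤ Ahi i j) (hb : ∀ i, blo i ≤ bhi i)
    (qA : Fin m → Fin n → Bool) (qb : Fin m → Bool) (x : Fin n → ℝ) :
    AESol Alo Ahi blo bhi qA qb (fun _ a b => a ≤ b) x ↔
    EASol Alo Ahi blo bhi qA qb (fun _ a b => a ≤ b) x := by
  constructor
  · intro hAE
    -- worst-case universal choice
    set W : Matrix (Fin m) (Fin n) ℝ := fun i j => if 0 ≤ x j then Ahi i j else Alo i j with hW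
    have hWmem : memIM Alo Ahi W := by
      intro i j
      by_cases h : 0 ≤ x j <;> simp [hW, h, hA i j, le_refl]
    have hbmem : memIV blo bhi blo := fun i => ⟨le_refl _, hb i⟩
    obtain ⟨A, b, hAmem, hbm, hAeq, hbeq, hrel⟩ := hAE W blo hWmem hbmem
    refine ⟨A, b, hAmem, hbm, ?_⟩
    intro A' b' hA'mem hb'mem i
    have hsum : ∑ j, (if qA i j then A' i j else A i j) * x j ≤ ∑ j, A i j * x j := by
      apply Finset.sum_le_sum
      intro j _
      by_cases hq : qA i j
      · simp only [hq, if_true]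
        rw [hAeq i j hq]
        by_cases hx : 0 ≤ x j
        · simp only [hW, hx, if_true]
          exact mul_le_mul_of_nonneg_right (hA'mem i j).2 hx
        · simp only [hW, hx, if_false]
          exact mul_le_mul_of_nonpos_right (hA'mem i j).1 (le_of_not_ge hx)
      · simp [hq]
    refine hsum.trans ((hrel i).trans ?_)
    by_cases hq : qb i
    · simp only [hq, if_true]
      rw [hbeq i hq]
      exact (hb'mem i).1
    · simp [hq]
  · intro ⟨A, b, hAmem, hbm, h⟩
    intro A' b' hA'mem hb'mem
    refine ⟨fun i j => if qA i j then A' i j else A i j,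
           fun i => if qb i then b' i else b i, ?_, ?_, ?_, ?_, ?_⟩
    · intro i j; by_cases hq : qA i j <;> simp [hq, hA'mem i j, hAmem i j]
    · intro i; by_cases hq : qb i <;> simp [hq, hb'mem i, hbm i]
    · intro i j hq; simp [hq]
    · intro i hq; simp [hq]
    · exact h A' b' hA'mem hb'mem
end

section
/- Let (Alo, Ahi) be an interval m×n matrix, (blo, bhi) an interval vector in ℝ^m, (𝒜, β) a quantifier pattern, and σ a relation vector assigning to each row i a relation σ_i ∈ {=, ≥, ≤}. For every x ∈ ℝ^n: x is an AE-solution of the mixed interval-quantifier system A x σ b if and only if for every row i the following holds: if σ_i is '=' then L_i(x) ≥ r_i and U_i(x) ≤ s_i; if σ_i is '≥' then L_i(x) ≥ r_i; if σ_i is '≤' then U_i(x) ≤ s_i. -/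
open Finset

/-- The three possible binary relations in a row of the system. -/
inductive IRel where
  | eq : IRel
  | ge : IRel
  | le : IRel

/-- Interpretation of an `IRel` as a relation on ℝ. -/
def IRel.holds : IRel → ℝ → ℝ → Prop
  | .eq, a, b => a = b
  | .ge, a, b => a ≥ b
  | .le, a, b => a ≤ b

lemma key_bounds (lo hi a xv : ℝ) (h1 : lo ≤ a) (h2 : a ≤ hi) :
    min (lo*xv) (hi*xv) ≤ a*xv ∧ a*xv ≤ max (lo*xv) (hi*xv) := by
  rcases le_total 0 xv with hx|hx
  · exact ⟨le_trans (min_le_left _ _) (mul_le_mul_of_nonneg_right h1 hx),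
      le_trans (mul_le_mul_of_nonneg_right h2 hx) (le_max_right _ _)⟩
  · exact ⟨le_trans (min_le_right _ _) (mul_le_mul_of_nonpos_right h2 hx),
      le_trans (mul_le_mul_of_nonpos_right h1 hx) (le_max_left _ _)⟩

lemma amin_mul (lo hi xv : ℝ) (h : lo ≤ hi) :
    (if 0 ≤ xv then lo else hi) * xv = min (lo*xv) (hi*xv) := by
  split_ifs with hx
  · rw [min_eq_left (mul_le_mul_of_nonneg_right h hx)]
  · rw [min_eq_right (mul_le_mul_of_nonpos_right h (le_of_not_ge hx))]

lemma amax_mul (lo hi xv : ℝ) (h : lo ≤ hi) :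
    (if 0 ≤ xv then hi else lo) * xv = max (lo*xv) (hi*xv) := by
  split_ifs with hx
  · rw [max_eq_right (mul_le_mul_of_nonneg_right h hx)]
  · rw [max_eq_left (mul_le_mul_of_nonpos_right h (le_of_not_ge hx))]

theorem stmt5 (m n : ℕ) (Alo Ahi : Matrix (Fin m) (Fin n) ℝ) (blo bhi : Fin m → ℝ)
    (hA : ∀ i j, Alo i j ≤ Ahi i j) (hb : ∀ i, blo i ≤ bhi i)
    (qA : Fin m → Fin n → Bool) (qb : Fin m → Bool) (x : Fin n → ℝ)
    (σ : Fin m → IRel) :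
    AESol Alo Ahi blo bhi qA qb (fun i a b => (σ i).holds a b) x ↔
    ∀ i,
      match σ i with
      | .eq =>
          (∑ j, if qA i j then min (Alo i j * x j) (Ahi i j * x j)
              else max (Alo i j * x j) (Ahi i j * x j)) ≥ (if qb i then bhi i else blo i) ∧
          (∑ j, if qA i j then max (Alo i j * x j) (Ahi i j * x j)
              else min (Alo i j * x j) (Ahi i j * x j)) ≤ (if qb i then blo i else bhi i)
      | .ge =>
          (∑ j, if qA i j then min (Alo i j * x j) (Ahi i j * x j)
              else max (Alo i j * x j) (Ahi i j * x j)) ≥ (if qb i then bhi i else blo i)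
      | .le =>
          (∑ j, if qA i j then max (Alo i j * x j) (Ahi i j * x j)
              else min (Alo i j * x j) (Ahi i j * x j)) ≤ (if qb i then blo i else bhi i) := by
  classical
  set L : Fin m → ℝ := fun i => ∑ j, if qA i j then min (Alo i j * x j) (Ahi i j * x j)
      else max (Alo i j * x j) (Ahi i j * x j) with hLdef
  set U : Fin m → ℝ := fun i => ∑ j, if qA i j then max (Alo i j * x j) (Ahi i j * x j)
      else min (Alo i j * x j) (Ahi i j * x j) with hUdef
  -- minimizing / maximizing matrices
  set Mn : Matrix (Fin m) (Fin n) ℝ := fun i j => if 0 ≤ x j then Alo i j else Ahi i j with hMndef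
  set Mx : Matrix (Fin m) (Fin n) ℝ := fun i j => if 0 ≤ x j then Ahi i j else Alo i j with hMxdef
  have hMnx : ∀ i j, Mn i j * x j = min (Alo i j * x j) (Ahi i j * x j) :=
    fun i j => amin_mul _ _ _ (hA i j)
  have hMxx : ∀ i j, Mx i j * x j = max (Alo i j * x j) (Ahi i j * x j) :=
    fun i j => amax_mul _ _ _ (hA i j)
  have hMnmem : memIM Alo Ahi Mn := by
    intro i j; simp only [hMndef]; split_ifs
    · exact ⟨le_refl _, hA i j⟩
    · exact ⟨hA i j, le_refl _⟩
  have hMxmem : memIM Alo Ahi Mx := by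
    intro i j; simp only [hMxdef]; split_ifs
    · exact ⟨hA i j, le_refl _⟩
    · exact ⟨le_refl _, hA i j⟩
  have hbhimem : memIV blo bhi bhi := fun i => ⟨hb i, le_refl _⟩
  have hblomem : memIV blo bhi blo := fun i => ⟨le_refl _, hb i⟩
  constructor
  · intro h
    obtain ⟨A1, b1, hA1, hb1, hA1q, hb1q, hrel1⟩ := h Mn bhi hMnmem hbhimem
    obtain ⟨A2, b2, hA2, hb2, hA2q, hb2q, hrel2⟩ := h Mx blo hMxmem hblomem
    have hs1 : ∀ i, (∑ j, A1 i j * x j) ≤ L i := by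
      intro i
      apply Finset.sum_le_sum
      intro j _
      by_cases hq : qA i j
      · simp only [hq, if_true]
        rw [hA1q i j hq, hMnx]
      · simp only [hq, if_false]
        exact (key_bounds _ _ _ _ (hA1 i j).1 (hA1 i j).2).2
    have hs2 : ∀ i, U i ≤ (∑ j, A2 i j * x j) := by
      intro i
      apply Finset.sum_le_sum
      intro j _
      by_cases hq : qA i j
      · simp only [hq, if_true]
        rw [hA2q i j hq, hMxx]
      · simp only [hq, if_false]
        exact (key_bounds _ _ _ _ (hA2 i j).1 (hA2 i j).2).1
    have hb1r : ∀ i, (if qb i then bhi i else blo i) ≤ b1 i := by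
      intro i; by_cases hq : qb i
      · simp only [hq, if_true]; rw [hb1q i hq]
      · simp only [hq, if_false]; exact (hb1 i).1
    have hb2r : ∀ i, b2 i ≤ (if qb i then blo i else bhi i) := by
      intro i; by_cases hq : qb i
      · simp only [hq, if_true]; rw [hb2q i hq]
      · simp only [hq, if_false]; exact (hb2 i).2
    intro i
    have h1 := hrel1 i
    have h2 := hrel2 i
    cases hσ : σ i with
    | eq =>
        simp only [hσ, IRel.holds] at h1 h2
        constructor
        · calc (if qb i then bhi i else blo i) ≤ b1 i := hb1r i
            _ = ∑ j, A1 i j * x j := h1.symm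
            _ ≤ L i := hs1 i
        · calc U i ≤ ∑ j, A2 i j * x j := hs2 i
            _ = b2 i := h2
            _ ≤ (if qb i then blo i else bhi i) := hb2r i
    | ge =>
        simp only [hσ, IRel.holds] at h1
        calc (if qb i then bhi i else blo i) ≤ b1 i := hb1r i
          _ ≤ ∑ j, A1 i j * x j := h1
          _ ≤ L i := hs1 i
    | le =>
        simp only [hσ, IRel.holds] at h2
        calc U i ≤ ∑ j, A2 i j * x j := hs2 i
          _ ≤ b2 i := h2
          _ ≤ (if qb i then blo i else bhi i) := hb2r i
  · intro h A' b' hA' hb'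
    -- row-wise reach interval [lo i, hi i]
    set lo : Fin m → ℝ := fun i => ∑ j, if qA i j then A' i j * x j
        else min (Alo i j * x j) (Ahi i j * x j) with hlodef
    set hi : Fin m → ℝ := fun i => ∑ j, if qA i j then A' i j * x j
        else max (Alo i j * x j) (Ahi i j * x j) with hhidef
    have hlohi : ∀ i, lo i ≤ hi i := by
      intro i
      apply Finset.sum_le_sum
      intro j _
      by_cases hq : qA i j
      · simp [hq]
      · simp only [hq, if_false]; exact min_le_max
    have hLhi : ∀ i, L i ≤ hi i := by
      intro i
      apply Finset.sum_le_sum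
      intro j _
      by_cases hq : qA i j
      · simp only [hq, if_true]
        exact (key_bounds _ _ _ _ (hA' i j).1 (hA' i j).2).1
      · simp [hq]
    have hloU : ∀ i, lo i ≤ U i := by
      intro i
      apply Finset.sum_le_sum
      intro j _
      by_cases hq : qA i j
      · simp only [hq, if_true]
        exact (key_bounds _ _ _ _ (hA' i j).1 (hA' i j).2).2
      · simp [hq]
    have hge : ∀ i, (σ i = .ge ∨ σ i = .eq) → (if qb i then bhi i else blo i) ≤ L i := by
      intro i hc
      have hi' := h i
      rcases hc with hc | hc <;> rw [hc] at hi'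
      · exact hi'
      · exact hi'.1
    have hle : ∀ i, (σ i = .le ∨ σ i = .eq) → U i ≤ (if qb i then blo i else bhi i) := by
      intro i hc
      have hi' := h i
      rcases hc with hc | hc <;> rw [hc] at hi'
      · exact hi'
      · exact hi'.2
    -- target value per row and right-hand side
    set c : Fin m → ℝ := fun i => match σ i with
      | .ge => hi i
      | .le => lo i
      | .eq => if qb i then b' i else max (lo i) (blo i) with hcdef
    set bb : Fin m → ℝ := fun i => if qb i then b' i else match σ i with
      | .ge => blo i
      | .le => bhi i
      | .eq => max (lo i) (blo i) with hbbdef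
    have hclo : ∀ i, lo i ≤ c i := by
      intro i
      simp only [hcdef]
      cases hσ : σ i with
      | ge => exact hlohi i
      | le => exact le_refl _
      | eq =>
          by_cases hq : qb i
          · simp only [hq, if_true]
            have h1 := hle i (Or.inr hσ)
            simp only [hq, if_true] at h1
            exact le_trans (hloU i) (le_trans h1 (hb' i).1)
          · simp only [hq, if_false]
            exact le_max_left _ _
    have hchi : ∀ i, c i ≤ hi i := by
      intro i
      simp only [hcdef]
      cases hσ : σ i with
      | ge => exact le_refl _
      | le => exact hlohi i
      | eq =>
          have h1 := hge i (Or.inr hσ)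
          by_cases hq : qb i
          · simp only [hq, if_true] at h1 ⊢
            exact le_trans (hb' i).2 (le_trans h1 (hLhi i))
          · simp only [hq, if_false] at h1 ⊢
            exact max_le (hlohi i) (le_trans h1 (hLhi i))
    have hbbmem : memIV blo bhi bb := by
      intro i
      simp only [hbbdef]
      by_cases hq : qb i
      · simp only [hq, if_true]; exact hb' i
      · simp only [hq, if_false]
        cases hσ : σ i with
        | ge => exact ⟨le_refl _, hb i⟩
        | le => exact ⟨hb i, le_refl _⟩
        | eq =>
            refine ⟨le_max_right _ _, max_le ?_ (hb i)⟩
            have h1 := hle i (Or.inr hσ)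
            simp only [hq, if_false] at h1
            exact le_trans (hloU i) h1
    have hbbq : ∀ i, qb i = true → bb i = b' i := by
      intro i hq; simp [hbbdef, hq]
    have hrelc : ∀ i, (σ i).holds (c i) (bb i) := by
      intro i
      simp only [hcdef, hbbdef]
      cases hσ : σ i with
      | ge =>
          simp only [IRel.holds]
          have h1 := hge i (Or.inl hσ)
          by_cases hq : qb i
          · simp only [hq, if_true] at h1 ⊢
            exact le_trans (hb' i).2 (le_trans h1 (hLhi i))
          · simp only [hq, if_false] at h1 ⊢
            exact le_trans h1 (hLhi i)
      | le =>
          simp only [IRel.holds]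
          have h1 := hle i (Or.inl hσ)
          by_cases hq : qb i
          · simp only [hq, if_true] at h1 ⊢
            exact le_trans (hloU i) (le_trans h1 (hb' i).1)
          · simp only [hq, if_false] at h1 ⊢
            exact le_trans (hloU i) h1
      | eq => exact rfl
    -- convex parameter
    set θ : Fin m → ℝ := fun i => if hi i ≤ lo i then 0 else (c i - lo i) / (hi i - lo i)
      with hθdef
    have hθ0 : ∀ i, 0 ≤ θ i := by
      intro i
      simp only [hθdef]
      split_ifs with hd
      · exact le_refl _
      · push_neg at hd
        exact div_nonneg (by linarith [hclo i]) (by linarith)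
    have hθ1 : ∀ i, θ i ≤ 1 := by
      intro i
      simp only [hθdef]
      split_ifs with hd
      · norm_num
      · push_neg at hd
        rw [div_le_one (by linarith)]
        linarith [hchi i]
    have hval : ∀ i, (1 - θ i) * lo i + θ i * hi i = c i := by
      intro i
      simp only [hθdef]
      split_ifs with hd
      · have he : hi i = lo i := le_antisymm hd (hlohi i)
        have hc : c i = lo i := le_antisymm (he ▸ hchi i) (hclo i)
        rw [hc, he]
        ring
      · push_neg at hd
        have hne : hi i - lo i ≠ 0 := by linarith
        field_simp
        ring
    set A : Matrix (Fin m) (Fin n) ℝ := fun i j =>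
      if qA i j then A' i j else (1 - θ i) * Mn i j + θ i * Mx i j with hAdef
    have hAmem : memIM Alo Ahi A := by
      intro i j
      simp only [hAdef]
      split_ifs with hq
      · exact hA' i j
      · have h1 := hMnmem i j
        have h2 := hMxmem i j
        have h3 := hθ0 i
        have h4 := hθ1 i
        constructor <;> nlinarith [h1.1, h1.2, h2.1, h2.2]
    have hAq : ∀ i j, qA i j = true → A i j = A' i j := by
      intro i j hq; simp [hAdef, hq]
    have hsum : ∀ i, (∑ j, A i j * x j) = (1 - θ i) * lo i + θ i * hi i := by
      intro i
      have hterm : ∀ j, A i j * x j =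
          (1 - θ i) * (if qA i j then A' i j * x j else min (Alo i j * x j) (Ahi i j * x j))
          + θ i * (if qA i j then A' i j * x j else max (Alo i j * x j) (Ahi i j * x j)) := by
        intro j
        by_cases hq : qA i j
        · simp only [hAdef, hq, if_true]; ring
        · simp only [hAdef, hq, Bool.false_eq_true, if_false]
          rw [← hMnx i j, ← hMxx i j]
          ring
      calc (∑ j, A i j * x j)
          = ∑ j, ((1 - θ i) * (if qA i j then A' i j * x j else min (Alo i j * x j) (Ahi i j * x j))
            + θ i * (if qA i j then A' i j * x j else max (Alo i j * x j) (Ahi i j * x j))) :=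
            Finset.sum_congr rfl (fun j _ => hterm j)
        _ = (1 - θ i) * lo i + θ i * hi i := by
            rw [Finset.sum_add_distrib, ← Finset.mul_sum, ← Finset.mul_sum]
    refine ⟨A, bb, hAmem, hbbmem, hAq, hbbq, ?_⟩
    intro i
    have heq : (∑ j, A i j * x j) = c i := (hsum i).trans (hval i)
    rw [heq]
    exact hrelc i
end

section
/- Let (Alo, Ahi) be an interval m×n matrix, (blo, bhi) an interval vector in ℝ^m, and (𝒜, β) a quantifier pattern. For every x ∈ ℝ^n: x is an AE-solution of the interval-quantifier system of equations A x = b if and only if x is simultaneously an AE-solution of the system of inequalities A x ≥ b and an AE-solution of the system of inequalities A x ≤ b, all three systems taken with the same interval data and the same quantifier pattern. -/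
open Finset

theorem stmt6 (m n : ℕ) (Alo Ahi : Matrix (Fin m) (Fin n) ℝ) (blo bhi : Fin m → ℝ)
    (hA : ∀ i j, Alo i j ≤ Ahi i j) (hb : ∀ i, blo i ≤ bhi i)
    (qA : Fin m → Fin n → Bool) (qb : Fin m → Bool) (x : Fin n → ℝ) :
    AESol Alo Ahi blo bhi qA qb (fun _ a b => a = b) x ↔
    (AESol Alo Ahi blo bhi qA qb (fun _ a b => a ≥ b) x ∧
     AESol Alo Ahi blo bhi qA qb (fun _ a b => a ≤ b) x) := by
  constructor
  · intro h
    constructor <;> intro A' b' hA' hb' <;>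
      obtain ⟨A, b, h1, h2, h3, h4, h5⟩ := h A' b' hA' hb'
    · exact ⟨A, b, h1, h2, h3, h4, fun i => (h5 i).ge⟩
    · exact ⟨A, b, h1, h2, h3, h4, fun i => (h5 i).le⟩
  · rintro ⟨hge, hle⟩ A' b' hA' hb'
    obtain ⟨A1, b1, hA1, hb1, hq1, hqb1, h1⟩ := hge A' b' hA' hb'
    obtain ⟨A2, b2, hA2, hb2, hq2, hqb2, h2⟩ := hle A' b' hA' hb'
    set u : Fin m → ℝ := fun i => (∑ j, A1 i j * x j) - b1 i with hu
    set v : Fin m → ℝ := fun i => (∑ j, A2 i j * x j) - b2 i with hv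
    have hu0 : ∀ i, 0 ≤ u i := fun i => sub_nonneg.2 (h1 i)
    have hv0 : ∀ i, v i ≤ 0 := fun i => sub_nonpos.2 (h2 i)
    set t : Fin m → ℝ := fun i => if u i - v i = 0 then 0 else u i / (u i - v i)
      with ht
    have ht0 : ∀ i, 0 ≤ t i := by
      intro i
      simp only [ht]
      split
      · exact le_refl 0
      · next h =>
        have : 0 < u i - v i := lt_of_le_of_ne (by linarith [hu0 i, hv0 i]) (Ne.symm h)
        exact div_nonneg (hu0 i) this.le
    have ht1 : ∀ i, t i ≤ 1 := by
      intro i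
      simp only [ht]
      split
      · norm_num
      · next h =>
        have hpos : 0 < u i - v i := lt_of_le_of_ne (by linarith [hu0 i, hv0 i]) (Ne.symm h)
        rw [div_le_one hpos]
        linarith [hv0 i]
    have hteq : ∀ i, (1 - t i) * u i + t i * v i = 0 := by
      intro i
      simp only [ht]
      split
      · next h =>
        have : u i = v i := by linarith
        have : u i = 0 := le_antisymm (by linarith [hv0 i]) (hu0 i)
        simp [this]
      · next h =>
        field_simp
        ring
    refine ⟨fun i j => (1 - t i) * A1 i j + t i * A2 i j,
      fun i => (1 - t i) * b1 i + t i * b2 i, ?_, ?_, ?_, ?_, ?_⟩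
    · intro i j
      dsimp only
      obtain ⟨l1, r1⟩ := hA1 i j
      obtain ⟨l2, r2⟩ := hA2 i j
      constructor <;> nlinarith [ht0 i, ht1 i]
    · intro i
      dsimp only
      obtain ⟨l1, r1⟩ := hb1 i
      obtain ⟨l2, r2⟩ := hb2 i
      constructor <;> nlinarith [ht0 i, ht1 i]
    · intro i j hq
      dsimp only
      rw [hq1 i j hq, hq2 i j hq]; ring
    · intro i hq
      dsimp only
      rw [hqb1 i hq, hqb2 i hq]; ring
    · intro i
      have hsum : (∑ j, ((1 - t i) * A1 i j + t i * A2 i j) * x j)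
          = (1 - t i) * (∑ j, A1 i j * x j) + t i * (∑ j, A2 i j * x j) := by
        rw [Finset.mul_sum, Finset.mul_sum, ← Finset.sum_add_distrib]
        congr 1 with j
        ring
      have := hteq i
      simp only [hu, hv] at this
      dsimp only
      rw [hsum]
      linarith
end

section
/- Let (Alo, Ahi) be an interval m×n matrix, (blo, bhi) an interval vector in ℝ^m, and (𝒜, β) a quantifier pattern. For every x ∈ ℝ^n: x is an AE-solution of the interval-quantifier system of equations A x = b if and only if for every row i, |Σ_j Ǎ_{ij} x_j − b̌_i| ≤ Σ_j 𝒜^s_{ij} Â_{ij} |x_j| + β^s_i b̂_i. -/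
open Finset

lemma mul_le_hi' (lo hi a x : ℝ) (h1 : lo ≤ a) (h2 : a ≤ hi) :
    a * x ≤ (lo + hi) / 2 * x + (hi - lo) / 2 * |x| := by
  rcases abs_cases x with ⟨h, _⟩ | ⟨h, _⟩ <;> nlinarith

lemma lo_le_mul' (lo hi a x : ℝ) (h1 : lo ≤ a) (h2 : a ≤ hi) :
    (lo + hi) / 2 * x - (hi - lo) / 2 * |x| ≤ a * x := by
  rcases abs_cases x with ⟨h, _⟩ | ⟨h, _⟩ <;> nlinarith

lemma pickMax_mul (lo hi x : ℝ) :
    (if 0 ≤ x then hi else lo) * x = (lo + hi) / 2 * x + (hi - lo) / 2 * |x| := by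
  rcases le_or_gt 0 x with h | h
  · rw [if_pos h, abs_of_nonneg h]; ring
  · rw [if_neg (not_le.mpr h), abs_of_neg h]; ring

lemma pickMin_mul (lo hi x : ℝ) :
    (if 0 ≤ x then lo else hi) * x = (lo + hi) / 2 * x - (hi - lo) / 2 * |x| := by
  rcases le_or_gt 0 x with h | h
  · rw [if_pos h, abs_of_nonneg h]; ring
  · rw [if_neg (not_le.mpr h), abs_of_neg h]; ring

lemma convex_mem_s7 (lo hi u v t : ℝ) (h1 : lo ≤ u) (h2 : u ≤ hi) (h3 : lo ≤ v)
    (h4 : v ≤ hi) (h5 : 0 ≤ t) (h6 : t ≤ 1) :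
    lo ≤ (1 - t) * u + t * v ∧ (1 - t) * u + t * v ≤ hi := by
  constructor <;> nlinarith

set_option maxHeartbeats 1000000 in
lemma rowSolve {n : ℕ} (Alo Ahi A' x : Fin n → ℝ) (blo bhi b' : ℝ)
    (qA : Fin n → Bool) (qb : Bool)
    (hA : ∀ j, Alo j ≤ Ahi j) (hb : blo ≤ bhi)
    (hA' : ∀ j, Alo j ≤ A' j ∧ A' j ≤ Ahi j) (hb' : blo ≤ b' ∧ b' ≤ bhi)
    (hineq : |∑ j, ((Alo j + Ahi j) / 2) * x j - (blo + bhi) / 2| ≤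
      (∑ j, (if qA j then (-1 : ℝ) else 1) * ((Ahi j - Alo j) / 2) * |x j|) +
        (if qb then (-1 : ℝ) else 1) * ((bhi - blo) / 2)) :
    ∃ (A : Fin n → ℝ) (b : ℝ), (∀ j, Alo j ≤ A j ∧ A j ≤ Ahi j) ∧ (blo ≤ b ∧ b ≤ bhi) ∧
      (∀ j, qA j = true → A j = A' j) ∧ (qb = true → b = b') ∧
      (∑ j, A j * x j = b) := by
  set f : Fin n → ℝ := fun j => if qA j then A' j else if 0 ≤ x j then Alo j else Ahi j with hf
  set g : Fin n → ℝ := fun j => if qA j then A' j else if 0 ≤ x j then Ahi j else Alo j with hg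
  set Blo : ℝ := if qb then b' else blo with hBlo
  set Bhi : ℝ := if qb then b' else bhi with hBhi
  set Lo : ℝ := (∑ j, f j * x j) - Bhi with hLodef
  set Hi : ℝ := (∑ j, g j * x j) - Blo with hHidef
  obtain ⟨hcl, hcr⟩ := abs_le.mp hineq
  have hfle : ∀ j ∈ Finset.univ, f j * x j ≤
      ((Alo j + Ahi j) / 2) * x j -
        (if qA j then (-1 : ℝ) else 1) * ((Ahi j - Alo j) / 2) * |x j| := by
    intro j _
    by_cases hq : qA j
    · simp only [hf, hq, if_true]
      have := mul_le_hi' (Alo j) (Ahi j) (A' j) (x j) (hA' j).1 (hA' j).2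
      linarith
    · simp only [hf, hq, Bool.false_eq_true, if_false]
      rw [pickMin_mul]
      linarith
  have hgge : ∀ j ∈ Finset.univ, ((Alo j + Ahi j) / 2) * x j +
      (if qA j then (-1 : ℝ) else 1) * ((Ahi j - Alo j) / 2) * |x j| ≤ g j * x j := by
    intro j _
    by_cases hq : qA j
    · simp only [hg, hq, if_true]
      have := lo_le_mul' (Alo j) (Ahi j) (A' j) (x j) (hA' j).1 (hA' j).2
      linarith
    · simp only [hg, hq, Bool.false_eq_true, if_false]
      rw [pickMax_mul]
      linarith
  have hBhi_ge : (blo + bhi) / 2 + (if qb then (-1 : ℝ) else 1) * ((bhi - blo) / 2) ≤ Bhi := by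
    by_cases hq : qb <;>
      simp only [hBhi, hq, if_true, Bool.false_eq_true, if_false] <;>
      linarith [hb'.1, hb'.2]
  have hBlo_le : Blo ≤ (blo + bhi) / 2 - (if qb then (-1 : ℝ) else 1) * ((bhi - blo) / 2) := by
    by_cases hq : qb <;>
      simp only [hBlo, hq, if_true, Bool.false_eq_true, if_false] <;>
      linarith [hb'.1, hb'.2]
  have hsumf : (∑ j, f j * x j) ≤
      (∑ j, ((Alo j + Ahi j) / 2) * x j) -
        ∑ j, (if qA j then (-1 : ℝ) else 1) * ((Ahi j - Alo j) / 2) * |x j| := by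
    rw [← Finset.sum_sub_distrib]
    exact Finset.sum_le_sum hfle
  have hsumg : (∑ j, ((Alo j + Ahi j) / 2) * x j) +
      (∑ j, (if qA j then (-1 : ℝ) else 1) * ((Ahi j - Alo j) / 2) * |x j|) ≤
        ∑ j, g j * x j := by
    rw [← Finset.sum_add_distrib]
    exact Finset.sum_le_sum hgge
  have hLo : Lo ≤ 0 := by rw [hLodef]; linarith
  have hHi : 0 ≤ Hi := by rw [hHidef]; linarith
  have hLoHi : Lo ≤ Hi := le_trans hLo hHi
  obtain ⟨t, ht0, ht1, hzero⟩ :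
      ∃ t : ℝ, 0 ≤ t ∧ t ≤ 1 ∧ (1 - t) * Lo + t * Hi = 0 := by
    by_cases hz : Hi - Lo = 0
    · refine ⟨0, le_refl 0, zero_le_one, ?_⟩
      have hL0 : Lo = 0 := by linarith
      rw [hL0]; ring
    · have hpos : 0 < Hi - Lo := lt_of_le_of_ne (by linarith) (Ne.symm hz)
      refine ⟨-Lo / (Hi - Lo), div_nonneg (by linarith) hpos.le, ?_, ?_⟩
      · rw [div_le_one hpos]; linarith
      · have hmul : -Lo / (Hi - Lo) * (Hi - Lo) = -Lo := div_mul_cancel₀ _ hz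
        linear_combination hmul
  have hfb : ∀ j, Alo j ≤ f j ∧ f j ≤ Ahi j := by
    intro j
    simp only [hf]
    split_ifs with h1 h2
    · exact hA' j
    · exact ⟨le_refl _, hA j⟩
    · exact ⟨hA j, le_refl _⟩
  have hgb : ∀ j, Alo j ≤ g j ∧ g j ≤ Ahi j := by
    intro j
    simp only [hg]
    split_ifs with h1 h2
    · exact hA' j
    · exact ⟨hA j, le_refl _⟩
    · exact ⟨le_refl _, hA j⟩
  have hBb : blo ≤ Blo ∧ Blo ≤ bhi := by
    by_cases hq : qb <;> simp only [hBlo, hq, if_true, Bool.false_eq_true, if_false]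
    · exact hb'
    · exact ⟨le_refl _, hb⟩
  have hBb' : blo ≤ Bhi ∧ Bhi ≤ bhi := by
    by_cases hq : qb <;> simp only [hBhi, hq, if_true, Bool.false_eq_true, if_false]
    · exact hb'
    · exact ⟨hb, le_refl _⟩
  clear_value f g Blo Bhi Lo Hi
  refine ⟨fun j => (1 - t) * f j + t * g j, (1 - t) * Bhi + t * Blo, ?_, ?_, ?_, ?_, ?_⟩
  · intro j
    obtain ⟨hf1, hf2⟩ := hfb j
    obtain ⟨hg1, hg2⟩ := hgb j
    exact convex_mem_s7 (Alo j) (Ahi j) (f j) (g j) t hf1 hf2 hg1 hg2 ht0 ht1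
  · obtain ⟨hB1, hB2⟩ := hBb
    obtain ⟨hB3, hB4⟩ := hBb'
    exact convex_mem_s7 blo bhi Bhi Blo t hB3 hB4 hB1 hB2 ht0 ht1
  · intro j hq
    show (1 - t) * f j + t * g j = A' j
    simp only [hf, hg, hq, if_true]
    ring
  · intro hq
    show (1 - t) * Bhi + t * Blo = b'
    simp only [hBlo, hBhi, hq, if_true]
    ring
  · show ∑ j, ((1 - t) * f j + t * g j) * x j = (1 - t) * Bhi + t * Blo
    have hsplit : ∑ j, ((1 - t) * f j + t * g j) * x j =
        (1 - t) * (∑ j, f j * x j) + t * (∑ j, g j * x j) := by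
      rw [Finset.mul_sum, Finset.mul_sum, ← Finset.sum_add_distrib]
      apply Finset.sum_congr rfl
      intro j _
      ring
    rw [hsplit]
    rw [hLodef, hHidef] at hzero
    linear_combination hzero

theorem stmt7 (m n : ℕ) (Alo Ahi : Matrix (Fin m) (Fin n) ℝ) (blo bhi : Fin m → ℝ)
    (hA : ∀ i j, Alo i j ≤ Ahi i j) (hb : ∀ i, blo i ≤ bhi i)
    (qA : Fin m → Fin n → Bool) (qb : Fin m → Bool) (x : Fin n → ℝ) :
    AESol Alo Ahi blo bhi qA qb (fun _ a b => a = b) x ↔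
    ∀ i,
      |∑ j, ((Alo i j + Ahi i j) / 2) * x j - (blo i + bhi i) / 2| ≤
        (∑ j, (if qA i j then (-1 : ℝ) else 1) * ((Ahi i j - Alo i j) / 2) * |x j|) +
          (if qb i then (-1 : ℝ) else 1) * ((bhi i - blo i) / 2) := by
  constructor
  · intro hsol i
    rw [abs_le]
    constructor
    · -- lower bound: use A' = pickMin, b' = bhi
      obtain ⟨A, b, hm, hbm, hAeq, hbeq, heq⟩ :=
        hsol (fun i j => if 0 ≤ x j then Alo i j else Ahi i j) bhi
          (by intro i j; dsimp only; split_ifs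
              · exact ⟨le_refl _, hA i j⟩
              · exact ⟨hA i j, le_refl _⟩)
          (fun i => ⟨hb i, le_refl _⟩)
      have he : (∑ j, A i j * x j) = b i := heq i
      have hterm : ∀ j ∈ Finset.univ, A i j * x j ≤
          ((Alo i j + Ahi i j) / 2) * x j +
            (if qA i j then (-1 : ℝ) else 1) * ((Ahi i j - Alo i j) / 2) * |x j| := by
        intro j _
        by_cases hq : qA i j
        · rw [hAeq i j hq]
          simp only [hq, if_true]
          rw [pickMin_mul]
          linarith
        · simp only [hq, Bool.false_eq_true, if_false]
          have := mul_le_hi' (Alo i j) (Ahi i j) (A i j) (x j) (hm i j).1 (hm i j).2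
          linarith
      have hsum : (∑ j, A i j * x j) ≤
          (∑ j, ((Alo i j + Ahi i j) / 2) * x j) +
            ∑ j, (if qA i j then (-1 : ℝ) else 1) * ((Ahi i j - Alo i j) / 2) * |x j| := by
        rw [← Finset.sum_add_distrib]
        exact Finset.sum_le_sum hterm
      have hbb : (blo i + bhi i) / 2 - (if qb i then (-1 : ℝ) else 1) * ((bhi i - blo i) / 2)
          ≤ b i := by
        by_cases hq : qb i
        · rw [hbeq i hq]
          simp only [hq, if_true]
          linarith
        · simp only [hq, Bool.false_eq_true, if_false]
          linarith [(hbm i).1]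
      linarith
    · -- upper bound: use A' = pickMax, b' = blo
      obtain ⟨A, b, hm, hbm, hAeq, hbeq, heq⟩ :=
        hsol (fun i j => if 0 ≤ x j then Ahi i j else Alo i j) blo
          (by intro i j; dsimp only; split_ifs
              · exact ⟨hA i j, le_refl _⟩
              · exact ⟨le_refl _, hA i j⟩)
          (fun i => ⟨le_refl _, hb i⟩)
      have he : (∑ j, A i j * x j) = b i := heq i
      have hterm : ∀ j ∈ Finset.univ,
          ((Alo i j + Ahi i j) / 2) * x j -
            (if qA i j then (-1 : ℝ) else 1) * ((Ahi i j - Alo i j) / 2) * |x j|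
          ≤ A i j * x j := by
        intro j _
        by_cases hq : qA i j
        · rw [hAeq i j hq]
          simp only [hq, if_true]
          rw [pickMax_mul]
          linarith
        · simp only [hq, Bool.false_eq_true, if_false]
          have := lo_le_mul' (Alo i j) (Ahi i j) (A i j) (x j) (hm i j).1 (hm i j).2
          linarith
      have hsum : (∑ j, ((Alo i j + Ahi i j) / 2) * x j) -
            (∑ j, (if qA i j then (-1 : ℝ) else 1) * ((Ahi i j - Alo i j) / 2) * |x j|)
          ≤ ∑ j, A i j * x j := by
        rw [← Finset.sum_sub_distrib]
        exact Finset.sum_le_sum hterm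
      have hbb : b i ≤
          (blo i + bhi i) / 2 + (if qb i then (-1 : ℝ) else 1) * ((bhi i - blo i) / 2) := by
        by_cases hq : qb i
        · rw [hbeq i hq]
          simp only [hq, if_true]
          linarith
        · simp only [hq, Bool.false_eq_true, if_false]
          linarith [(hbm i).2]
      linarith
  · intro h A' b' hA' hb'
    have H : ∀ i, ∃ (Arow : Fin n → ℝ) (brow : ℝ),
        (∀ j, Alo i j ≤ Arow j ∧ Arow j ≤ Ahi i j) ∧ (blo i ≤ brow ∧ brow ≤ bhi i) ∧
        (∀ j, qA i j = true → Arow j = A' i j) ∧ (qb i = true → brow = b' i) ∧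
        (∑ j, Arow j * x j = brow) := by
      intro i
      exact rowSolve (fun j => Alo i j) (fun j => Ahi i j) (fun j => A' i j) x
        (blo i) (bhi i) (b' i) (qA i) (qb i) (hA i) (hb i) (hA' i) (hb' i) (h i)
    choose A b h1 h2 h3 h4 h5 using H
    exact ⟨fun i j => A i j, b, fun i j => h1 i j, h2, fun i j => h3 i j, h4, h5⟩
end

section
/- Let (Alo, Ahi) be an interval m×n matrix, (blo, bhi) an interval vector in ℝ^m, and (𝒜, β) a quantifier pattern. For every x ∈ ℝ^n: x is an AE-solution of the interval-quantifier system of inequalities A x ≥ b if and only if for every row i, b̌_i − Σ_j Ǎ_{ij} x_j ≤ Σ_j 𝒜^s_{ij} Â_{ij} |x_j| + β^s_i b̂_i. -/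
open Finset

lemma key_le {lo hi a x : ℝ} (h1 : lo ≤ a) (h2 : a ≤ hi) :
    a * x ≤ ((lo + hi) / 2) * x + ((hi - lo) / 2) * |x| := by
  have h3 : |(a - (lo + hi) / 2) * x| ≤ ((hi - lo) / 2) * |x| := by
    rw [abs_mul]
    exact mul_le_mul_of_nonneg_right (abs_le.2 ⟨by linarith, by linarith⟩) (abs_nonneg x)
  nlinarith [le_abs_self ((a - (lo + hi) / 2) * x)]

lemma key_ge {lo hi a x : ℝ} (h1 : lo ≤ a) (h2 : a ≤ hi) :
    ((lo + hi) / 2) * x - ((hi - lo) / 2) * |x| ≤ a * x := by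
  have h3 : |(a - (lo + hi) / 2) * x| ≤ ((hi - lo) / 2) * |x| := by
    rw [abs_mul]
    exact mul_le_mul_of_nonneg_right (abs_le.2 ⟨by linarith, by linarith⟩) (abs_nonneg x)
  nlinarith [neg_abs_le ((a - (lo + hi) / 2) * x)]

lemma pick_min {lo hi x : ℝ} :
    (if 0 ≤ x then lo else hi) * x = ((lo + hi) / 2) * x - ((hi - lo) / 2) * |x| := by
  split_ifs with h
  · rw [abs_of_nonneg h]; ring
  · rw [abs_of_neg (lt_of_not_ge h)]; ring

lemma pick_max {lo hi x : ℝ} :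
    (if 0 ≤ x then hi else lo) * x = ((lo + hi) / 2) * x + ((hi - lo) / 2) * |x| := by
  split_ifs with h
  · rw [abs_of_nonneg h]; ring
  · rw [abs_of_neg (lt_of_not_ge h)]; ring

theorem stmt8 (m n : ℕ) (Alo Ahi : Matrix (Fin m) (Fin n) ℝ) (blo bhi : Fin m → ℝ)
    (hA : ∀ i j, Alo i j ≤ Ahi i j) (hb : ∀ i, blo i ≤ bhi i)
    (qA : Fin m → Fin n → Bool) (qb : Fin m → Bool) (x : Fin n → ℝ) :
    AESol Alo Ahi blo bhi qA qb (fun _ a b => a ≥ b) x ↔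
    ∀ i,
      (blo i + bhi i) / 2 - ∑ j, ((Alo i j + Ahi i j) / 2) * x j ≤
        (∑ j, (if qA i j then (-1 : ℝ) else 1) * ((Ahi i j - Alo i j) / 2) * |x j|) +
          (if qb i then (-1 : ℝ) else 1) * ((bhi i - blo i) / 2) := by
  constructor
  · intro hsol i
    obtain ⟨A, b, hAmem, hbmem, hqA, hqb, hrel⟩ :=
      hsol (fun i j => if 0 ≤ x j then Alo i j else Ahi i j) bhi
        (fun i j => by
          dsimp only
          split_ifs
          · exact ⟨le_refl _, hA i j⟩
          · exact ⟨hA i j, le_refl _⟩)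
        (fun i => ⟨hb i, le_refl _⟩)
    have h1 : ∀ j, A i j * x j ≤ ((Alo i j + Ahi i j) / 2) * x j +
        (if qA i j then (-1 : ℝ) else 1) * ((Ahi i j - Alo i j) / 2) * |x j| := by
      intro j
      by_cases hq : qA i j
      · rw [hqA i j hq, if_pos hq]
        have := pick_min (lo := Alo i j) (hi := Ahi i j) (x := x j)
        linarith
      · rw [if_neg hq]
        have := key_le (hAmem i j).1 (hAmem i j).2 (x := x j)
        linarith
    have hbge : (blo i + bhi i) / 2 - (if qb i then (-1 : ℝ) else 1) * ((bhi i - blo i) / 2)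
        ≤ b i := by
      by_cases hq : qb i
      · rw [hqb i hq, if_pos hq]; linarith
      · rw [if_neg hq]; linarith [(hbmem i).1]
    have hsum := Finset.sum_le_sum (s := Finset.univ) (fun j _ => h1 j)
    rw [Finset.sum_add_distrib] at hsum
    have hr := hrel i
    dsimp only at hr
    linarith
  · intro h A' b' hA' hb'
    refine ⟨fun i j => if qA i j then A' i j else (if 0 ≤ x j then Ahi i j else Alo i j),
      fun i => if qb i then b' i else blo i, ?_, ?_, ?_, ?_, ?_⟩
    · intro i j
      dsimp only
      split_ifs
      · exact hA' i j
      · exact ⟨hA i j, le_refl _⟩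
      · exact ⟨le_refl _, hA i j⟩
    · intro i
      dsimp only
      split_ifs
      · exact hb' i
      · exact ⟨le_refl _, hb i⟩
    · intro i j hq; simp [hq]
    · intro i hq; simp [hq]
    · intro i
      have h1 : ∀ j, ((Alo i j + Ahi i j) / 2) * x j +
          (if qA i j then (-1 : ℝ) else 1) * ((Ahi i j - Alo i j) / 2) * |x j| ≤
          (if qA i j then A' i j else (if 0 ≤ x j then Ahi i j else Alo i j)) * x j := by
        intro j
        by_cases hq : qA i j
        · rw [if_pos hq, if_pos hq]
          have := key_ge (hA' i j).1 (hA' i j).2 (x := x j)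
          linarith
        · rw [if_neg hq, if_neg hq]
          have := pick_max (lo := Alo i j) (hi := Ahi i j) (x := x j)
          linarith
      have hble : (if qb i then b' i else blo i) ≤
          (blo i + bhi i) / 2 - (if qb i then (-1 : ℝ) else 1) * ((bhi i - blo i) / 2) := by
        by_cases hq : qb i
        · rw [if_pos hq, if_pos hq]; linarith [(hb' i).2]
        · rw [if_neg hq, if_neg hq]; linarith
      have hsum := Finset.sum_le_sum (s := Finset.univ) (fun j _ => h1 j)
      rw [Finset.sum_add_distrib] at hsum
      have hi := h i
      dsimp only
      linarith
end

section
/- Let (Alo, Ahi) be an interval m×n matrix, (blo, bhi) an interval vector in ℝ^m, (𝒜, β) a quantifier pattern, and σ a relation vector with σ_i ∈ {=, ≥, ≤} for each row i. For every x ∈ ℝ^n: x is an AE-solution of the mixed interval-quantifier system A x σ b if and only if for every row i, abs^σ_i(Σ_j Ǎ_{ij} x_j − b̌_i) ≤ Σ_j 𝒜^s_{ij} Â_{ij} |x_j| + β^s_i b̂_i, where abs^σ_i(y) = |y| if σ_i is '=', abs^σ_i(y) = −y if σ_i is '≥', and abs^σ_i(y) = y if σ_i is '≤'. -/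
open Finset

/-- The row-wise convolution operation `abs^σ`. -/
def IRel.absr : IRel → ℝ → ℝ
  | .eq, y => |y|
  | .ge, y => -y
  | .le, y => y

/- ---------- auxiliary material ---------- -/

noncomputable def sg (x : ℝ) : ℝ := if 0 ≤ x then 1 else -1

lemma sg_mul_self (x : ℝ) : sg x * x = |x| := by
  unfold sg; split
  · rw [one_mul, abs_of_nonneg ‹_›]
  · rw [neg_one_mul, abs_of_neg (lt_of_not_ge ‹_›)]

lemma abs_sg (x : ℝ) : |sg x| = 1 := by unfold sg; split <;> simp

lemma theta_mem {lo hi θ y : ℝ} (h : lo ≤ hi) (hθ : |θ| ≤ 1) :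
    lo ≤ (lo + hi) / 2 + θ * ((hi - lo) / 2) * sg y ∧
      (lo + hi) / 2 + θ * ((hi - lo) / 2) * sg y ≤ hi := by
  have ha : (0:ℝ) ≤ (hi - lo) / 2 := by linarith
  have hbnd : |θ * ((hi - lo) / 2) * sg y| ≤ (hi - lo) / 2 := by
    rw [abs_mul, abs_mul, abs_sg, mul_one, abs_of_nonneg ha]
    calc |θ| * ((hi - lo) / 2) ≤ 1 * ((hi - lo) / 2) :=
          mul_le_mul_of_nonneg_right hθ ha
      _ = (hi - lo) / 2 := one_mul _
  have h1 := abs_le.mp hbnd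
  constructor <;> linarith [h1.1, h1.2]

lemma dev_abs_le {lo hi a y : ℝ} (h1 : lo ≤ a) (h2 : a ≤ hi) :
    |(a - (lo + hi) / 2) * y| ≤ ((hi - lo) / 2) * |y| := by
  rw [abs_mul]
  apply mul_le_mul_of_nonneg_right _ (abs_nonneg y)
  rw [abs_le]; constructor <;> linarith

lemma part_abs_le {n : ℕ} (f g : Fin n → ℝ) (p : Fin n → Prop) [DecidablePred p]
    (q : Prop) [Decidable q] (c d : ℝ)
    (hfg : ∀ j, p j → |f j| ≤ g j) (hcd : q → |c| ≤ d) :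
    |(∑ j, if p j then f j else 0) - (if q then c else 0)| ≤
      (∑ j, if p j then g j else 0) + (if q then d else 0) := by
  have h1 : |∑ j, if p j then f j else 0| ≤ ∑ j, if p j then g j else 0 := by
    calc |∑ j, if p j then f j else 0| ≤ ∑ j, |if p j then f j else 0| :=
          Finset.abs_sum_le_sum_abs _ _
      _ ≤ ∑ j, if p j then g j else 0 := by
          apply Finset.sum_le_sum
          intro j _
          by_cases h : p j <;> simp [h, hfg j]
  have h2 : |if q then c else 0| ≤ if q then d else 0 := by
    by_cases h : q <;> simp [h, hcd]
  calc |(∑ j, if p j then f j else 0) - (if q then c else 0)|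
      ≤ |∑ j, if p j then f j else 0| + |if q then c else 0| := abs_sub _ _
    _ ≤ _ := add_le_add h1 h2

lemma part_abs_le' {n : ℕ} (f g : Fin n → ℝ) (p : Fin n → Prop) [DecidablePred p]
    (q : Prop) [Decidable q] (c d : ℝ)
    (hfg : ∀ j, |f j| ≤ g j) (hcd : |c| ≤ d) :
    |(∑ j, if p j then 0 else f j) - (if q then 0 else c)| ≤
      (∑ j, if p j then 0 else g j) + (if q then 0 else d) := by
  have h := part_abs_le f g (fun j => ¬ p j) (¬ q) c d (fun j _ => hfg j) (fun _ => hcd)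
  simpa [ite_not] using h

lemma part_nonneg {n : ℕ} (g : Fin n → ℝ) (p : Fin n → Prop) [DecidablePred p]
    (q : Prop) [Decidable q] (d : ℝ) (hg : ∀ j, 0 ≤ g j) (hd : 0 ≤ d) :
    0 ≤ (∑ j, if p j then g j else 0) + (if q then d else 0) := by
  apply add_nonneg
  · apply Finset.sum_nonneg; intro j _; by_cases h : p j <;> simp [h, hg j]
  · by_cases h : q <;> simp [h, hd]

lemma part_nonneg' {n : ℕ} (g : Fin n → ℝ) (p : Fin n → Prop) [DecidablePred p]
    (q : Prop) [Decidable q] (d : ℝ) (hg : ∀ j, 0 ≤ g j) (hd : 0 ≤ d) :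
    0 ≤ (∑ j, if p j then 0 else g j) + (if q then 0 else d) := by
  have := part_nonneg g (fun j => ¬ p j) (¬ q) d hg hd
  simpa [ite_not] using this

lemma row_decomp {m n : ℕ} (Alo Ahi A : Matrix (Fin m) (Fin n) ℝ) (blo bhi b : Fin m → ℝ)
    (qA : Fin m → Fin n → Bool) (qb : Fin m → Bool) (x : Fin n → ℝ) (i : Fin m) :
    ∑ j, A i j * x j - b i =
      (∑ j, ((Alo i j + Ahi i j) / 2) * x j - (blo i + bhi i) / 2)
      + ((∑ j, if qA i j then (A i j - (Alo i j + Ahi i j) / 2) * x j else 0)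
          - (if qb i then b i - (blo i + bhi i) / 2 else 0))
      + ((∑ j, if qA i j then 0 else (A i j - (Alo i j + Ahi i j) / 2) * x j)
          - (if qb i then 0 else b i - (blo i + bhi i) / 2)) := by
  have h1 : ∀ j ∈ Finset.univ, A i j * x j = ((Alo i j + Ahi i j) / 2) * x j
      + ((if qA i j then (A i j - (Alo i j + Ahi i j) / 2) * x j else 0)
        + (if qA i j then 0 else (A i j - (Alo i j + Ahi i j) / 2) * x j)) := by
    intro j _; by_cases hq : qA i j <;> simp [hq] <;> ring
  rw [Finset.sum_congr rfl h1, Finset.sum_add_distrib, Finset.sum_add_distrib]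
  have h2 : b i = (blo i + bhi i) / 2 + (if qb i then b i - (blo i + bhi i) / 2 else 0)
      + (if qb i then 0 else b i - (blo i + bhi i) / 2) := by
    by_cases hq : qb i <;> simp [hq]
  linarith [h2]

theorem stmt10 (m n : ℕ) (Alo Ahi : Matrix (Fin m) (Fin n) ℝ) (blo bhi : Fin m → ℝ)
    (hA : ∀ i j, Alo i j ≤ Ahi i j) (hb : ∀ i, blo i ≤ bhi i)
    (qA : Fin m → Fin n → Bool) (qb : Fin m → Bool) (x : Fin n → ℝ)
    (σ : Fin m → IRel) :
    AESol Alo Ahi blo bhi qA qb (fun i a b => (σ i).holds a b) x ↔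
    ∀ i,
      (σ i).absr (∑ j, ((Alo i j + Ahi i j) / 2) * x j - (blo i + bhi i) / 2) ≤
        (∑ j, (if qA i j then (-1 : ℝ) else 1) * ((Ahi i j - Alo i j) / 2) * |x j|) +
          (if qb i then (-1 : ℝ) else 1) * ((bhi i - blo i) / 2) := by
  classical
  -- the right hand side equals S i - R i
  have hrhs : ∀ i : Fin m,
      (∑ j, (if qA i j then (-1 : ℝ) else 1) * ((Ahi i j - Alo i j) / 2) * |x j|) +
        (if qb i then (-1 : ℝ) else 1) * ((bhi i - blo i) / 2)
      = ((∑ j, if qA i j then 0 else ((Ahi i j - Alo i j) / 2) * |x j|)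
          + (if qb i then 0 else (bhi i - blo i) / 2))
        - ((∑ j, if qA i j then ((Ahi i j - Alo i j) / 2) * |x j| else 0)
          + (if qb i then (bhi i - blo i) / 2 else 0)) := by
    intro i
    have h1 : ∀ j ∈ Finset.univ,
        (if qA i j then (-1 : ℝ) else 1) * ((Ahi i j - Alo i j) / 2) * |x j|
        = (if qA i j then 0 else ((Ahi i j - Alo i j) / 2) * |x j|)
          - (if qA i j then ((Ahi i j - Alo i j) / 2) * |x j| else 0) := by
      intro j _; by_cases hq : qA i j <;> simp [hq] <;> ring
    rw [Finset.sum_congr rfl h1, Finset.sum_sub_distrib]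
    by_cases hq : qb i <;> simp [hq] <;> ring
  have hR0 : ∀ i : Fin m, 0 ≤ (∑ j, if qA i j then ((Ahi i j - Alo i j) / 2) * |x j| else 0)
      + (if qb i then (bhi i - blo i) / 2 else 0) := by
    intro i
    exact part_nonneg _ _ _ _ (fun j => mul_nonneg (by linarith [hA i j]) (abs_nonneg _))
      (by linarith [hb i])
  have hS0 : ∀ i : Fin m, 0 ≤ (∑ j, if qA i j then 0 else ((Ahi i j - Alo i j) / 2) * |x j|)
      + (if qb i then 0 else (bhi i - blo i) / 2) := by
    intro i
    exact part_nonneg' _ _ _ _ (fun j => mul_nonneg (by linarith [hA i j]) (abs_nonneg _))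
      (by linarith [hb i])
  constructor
  · -- forward direction
    intro h
    set t : Fin m → ℝ := fun i => match σ i with
      | IRel.eq => sg (∑ j, ((Alo i j + Ahi i j) / 2) * x j - (blo i + bhi i) / 2)
      | IRel.ge => -1
      | IRel.le => 1 with ht
    have ht_abs : ∀ i, |t i| ≤ 1 := by
      intro i
      rcases hσ : σ i with _ | _ | _ <;> simp [ht, hσ, abs_sg]
    set A' : Matrix (Fin m) (Fin n) ℝ := fun i j =>
      if qA i j then (Alo i j + Ahi i j) / 2 + t i * ((Ahi i j - Alo i j) / 2) * sg (x j)
      else (Alo i j + Ahi i j) / 2 with hA'def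
    set b' : Fin m → ℝ := fun i =>
      if qb i then (blo i + bhi i) / 2 - t i * ((bhi i - blo i) / 2)
      else (blo i + bhi i) / 2 with hb'def
    have hmA' : memIM Alo Ahi A' := by
      intro i j
      by_cases hq : qA i j
      · simpa [hA'def, hq] using theta_mem (hA i j) (ht_abs i)
      · simp only [hA'def, hq]
        constructor <;> [skip; skip] <;> simp <;> linarith [hA i j]
    have hmb' : memIV blo bhi b' := by
      intro i
      by_cases hq : qb i
      · have h1 : |t i * ((bhi i - blo i) / 2)| ≤ (bhi i - blo i) / 2 := by
          rw [abs_mul, abs_of_nonneg (by linarith [hb i] : (0:ℝ) ≤ (bhi i - blo i) / 2)]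
          calc |t i| * ((bhi i - blo i) / 2) ≤ 1 * ((bhi i - blo i) / 2) :=
                mul_le_mul_of_nonneg_right (ht_abs i) (by linarith [hb i])
            _ = (bhi i - blo i) / 2 := one_mul _
        have h2 := abs_le.mp h1
        simp only [hb'def, hq, if_true]
        constructor <;> linarith [h2.1, h2.2]
      · have e : b' i = (blo i + bhi i) / 2 := by
          simp only [hb'def]; rw [if_neg hq]
        rw [e]
        constructor <;> linarith [hb i]
    obtain ⟨A, b, hmA, hmb, hAg, hbg, hrel⟩ := h A' b' hmA' hmb'
    intro i
    rw [hrhs i]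
    have hdec := row_decomp Alo Ahi A blo bhi b qA qb x i
    -- the ∀-part equals t i * R i
    have hterm : ∀ j ∈ Finset.univ,
        (if qA i j then (A i j - (Alo i j + Ahi i j) / 2) * x j else 0)
        = t i * (if qA i j then ((Ahi i j - Alo i j) / 2) * |x j| else 0) := by
      intro j _
      by_cases hq : qA i j
      · have e1 : A i j = (Alo i j + Ahi i j) / 2
            + t i * ((Ahi i j - Alo i j) / 2) * sg (x j) := by
          rw [hAg i j hq]; simp [hA'def, hq]
        rw [if_pos hq, if_pos hq, e1, ← sg_mul_self (x j)]; ring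
      · simp [hq]
    have hU : (∑ j, if qA i j then (A i j - (Alo i j + Ahi i j) / 2) * x j else 0)
        - (if qb i then b i - (blo i + bhi i) / 2 else 0)
        = t i * ((∑ j, if qA i j then ((Ahi i j - Alo i j) / 2) * |x j| else 0)
          + (if qb i then (bhi i - blo i) / 2 else 0)) := by
      rw [Finset.sum_congr rfl hterm, ← Finset.mul_sum]
      by_cases hq : qb i
      · have e2 : b i = (blo i + bhi i) / 2 - t i * ((bhi i - blo i) / 2) := by
          rw [hbg i hq]; simp [hb'def, hq]
        rw [if_pos hq, if_pos hq, e2]; ring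
      · rw [if_neg hq, if_neg hq]; ring
    have hW : |(∑ j, if qA i j then 0 else (A i j - (Alo i j + Ahi i j) / 2) * x j)
        - (if qb i then 0 else b i - (blo i + bhi i) / 2)|
        ≤ (∑ j, if qA i j then 0 else ((Ahi i j - Alo i j) / 2) * |x j|)
          + (if qb i then 0 else (bhi i - blo i) / 2) := by
      apply part_abs_le'
      · intro j; exact dev_abs_le (hmA i j).1 (hmA i j).2
      · rw [abs_le]; constructor <;> linarith [(hmb i).1, (hmb i).2]
    have hWle := (abs_le.mp hW)
    have hreli : (σ i).holds (∑ j, A i j * x j) (b i) := hrel i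
    rcases hσ : σ i with _ | _ | _
    · -- equality case
      have htv : t i = sg (∑ j, ((Alo i j + Ahi i j) / 2) * x j - (blo i + bhi i) / 2) := by
        simp [ht, hσ]
      rw [hσ] at hreli
      simp only [IRel.holds] at hreli
      simp only [IRel.absr]
      -- hdec + hreli : 0 = c + t*R + W
      set c := ∑ j, ((Alo i j + Ahi i j) / 2) * x j - (blo i + bhi i) / 2 with hc
      set R := (∑ j, if qA i j then ((Ahi i j - Alo i j) / 2) * |x j| else 0)
        + (if qb i then (bhi i - blo i) / 2 else 0) with hRdef
      have hR0i : (0:ℝ) ≤ R := hR0 i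
      have habs : |c + sg c * R| = |c| + R := by
        by_cases hc0 : 0 ≤ c
        · rw [sg, if_pos hc0, one_mul, abs_of_nonneg hc0,
            abs_of_nonneg (by linarith [hR0i])]
        · push_neg at hc0
          rw [sg, if_neg (not_le.mpr hc0), abs_of_neg hc0,
            abs_of_nonpos (by nlinarith [hR0i])]
          ring
      have hzero : c + sg c * R
          = -((∑ j, if qA i j then 0 else (A i j - (Alo i j + Ahi i j) / 2) * x j)
            - (if qb i then 0 else b i - (blo i + bhi i) / 2)) := by
        rw [← htv, ← hU]
        linarith [hdec, hreli]
      have : |c| + R ≤ (∑ j, if qA i j then 0 else ((Ahi i j - Alo i j) / 2) * |x j|)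
          + (if qb i then 0 else (bhi i - blo i) / 2) := by
        rw [← habs, hzero, abs_neg]
        exact hW
      linarith
    · -- ≥ case
      have htv : t i = -1 := by simp [ht, hσ]
      rw [hσ] at hreli
      simp only [IRel.holds] at hreli
      simp only [IRel.absr]
      rw [htv] at hU
      linarith [hdec, hU, hreli, hWle.2, hR0 i]
    · -- ≤ case
      have htv : t i = 1 := by simp [ht, hσ]
      rw [hσ] at hreli
      simp only [IRel.holds] at hreli
      simp only [IRel.absr]
      rw [htv] at hU
      linarith [hdec, hU, hreli, hWle.1, hR0 i]
  · -- backward direction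
    intro h A' b' hmA' hmb'
    -- deviation of the ∀-part
    set u : Fin m → ℝ := fun i =>
      (∑ j, if qA i j then (A' i j - (Alo i j + Ahi i j) / 2) * x j else 0)
        - (if qb i then b' i - (blo i + bhi i) / 2 else 0) with hu_def
    have hu : ∀ i, |u i| ≤ (∑ j, if qA i j then ((Ahi i j - Alo i j) / 2) * |x j| else 0)
        + (if qb i then (bhi i - blo i) / 2 else 0) := by
      intro i
      apply part_abs_le
      · intro j _; exact dev_abs_le (hmA' i j).1 (hmA' i j).2
      · intro _; rw [abs_le]; constructor <;> linarith [(hmb' i).1, (hmb' i).2]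
    set c : Fin m → ℝ := fun i =>
      ∑ j, ((Alo i j + Ahi i j) / 2) * x j - (blo i + bhi i) / 2 with hc_def
    set S : Fin m → ℝ := fun i =>
      (∑ j, if qA i j then 0 else ((Ahi i j - Alo i j) / 2) * |x j|)
        + (if qb i then 0 else (bhi i - blo i) / 2) with hS_def
    set R : Fin m → ℝ := fun i =>
      (∑ j, if qA i j then ((Ahi i j - Alo i j) / 2) * |x j| else 0)
        + (if qb i then (bhi i - blo i) / 2 else 0) with hR_def
    have hineq : ∀ i, (σ i).absr (c i) ≤ S i - R i := by
      intro i
      have := h i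
      rw [hrhs i] at this
      exact this
    set v : Fin m → ℝ := fun i => match σ i with
      | IRel.eq => -(c i + u i)
      | IRel.ge => S i
      | IRel.le => -(S i) with hv_def
    have hu' : ∀ i, |u i| ≤ R i := fun i => hu i
    have hS0' : ∀ i, (0:ℝ) ≤ S i := fun i => hS0 i
    have hv : ∀ i, |v i| ≤ S i := by
      intro i
      rcases hσ : σ i with _ | _ | _
      · have h1 := hineq i
        rw [hσ] at h1
        simp only [IRel.absr] at h1
        have hvv : v i = -(c i + u i) := by
          have e : v i = match σ i with
            | IRel.eq => -(c i + u i)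
            | IRel.ge => S i
            | IRel.le => -(S i) := by rw [hv_def]
          rw [e, hσ]
        rw [hvv, abs_neg]
        calc |c i + u i| ≤ |c i| + |u i| := abs_add_le _ _
          _ ≤ (S i - R i) + R i := add_le_add h1 (hu' i)
          _ = S i := by ring
      · have : v i = S i := by simp [hv_def, hσ]
        rw [this, abs_of_nonneg (hS0' i)]
      · have : v i = -(S i) := by simp [hv_def, hσ]
        rw [this, abs_neg, abs_of_nonneg (hS0' i)]
    set θ : Fin m → ℝ := fun i => if S i = 0 then 0 else v i / S i with hθ_def
    have hθ1 : ∀ i, |θ i| ≤ 1 := by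
      intro i
      by_cases hs : S i = 0
      · simp [hθ_def, hs]
      · have hSpos : 0 < S i := lt_of_le_of_ne (hS0' i) (Ne.symm hs)
        simp only [hθ_def, hs, if_false]
        rw [abs_div, abs_of_pos hSpos, div_le_one hSpos]
        exact hv i
    have hθ2 : ∀ i, θ i * S i = v i := by
      intro i
      by_cases hs : S i = 0
      · have hv0 : v i = 0 := by
          have h1 := hv i
          rw [hs] at h1
          have h2 := abs_nonneg (v i)
          have : |v i| = 0 := le_antisymm h1 h2
          exact abs_eq_zero.mp this
        simp [hθ_def, hs, hv0]
      · simp only [hθ_def, hs, if_false]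
        field_simp
    set A : Matrix (Fin m) (Fin n) ℝ := fun i j =>
      if qA i j then A' i j
      else (Alo i j + Ahi i j) / 2 + θ i * ((Ahi i j - Alo i j) / 2) * sg (x j) with hAdef
    set b : Fin m → ℝ := fun i =>
      if qb i then b' i else (blo i + bhi i) / 2 - θ i * ((bhi i - blo i) / 2) with hbdef
    refine ⟨A, b, ?_, ?_, ?_, ?_, ?_⟩
    · intro i j
      by_cases hq : qA i j
      · simpa [hAdef, hq] using hmA' i j
      · simpa [hAdef, hq] using theta_mem (hA i j) (hθ1 i)
    · intro i
      by_cases hq : qb i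
      · simpa [hbdef, hq] using hmb' i
      · have h1 : |θ i * ((bhi i - blo i) / 2)| ≤ (bhi i - blo i) / 2 := by
          rw [abs_mul, abs_of_nonneg (by linarith [hb i] : (0:ℝ) ≤ (bhi i - blo i) / 2)]
          calc |θ i| * ((bhi i - blo i) / 2) ≤ 1 * ((bhi i - blo i) / 2) :=
                mul_le_mul_of_nonneg_right (hθ1 i) (by linarith [hb i])
            _ = (bhi i - blo i) / 2 := one_mul _
        have h2 := abs_le.mp h1
        have e : b i = (blo i + bhi i) / 2 - θ i * ((bhi i - blo i) / 2) := by
          simp only [hbdef]; rw [if_neg hq]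
        rw [e]
        constructor <;> linarith [h2.1, h2.2]
    · intro i j hq; simp [hAdef, hq]
    · intro i hq; simp [hbdef, hq]
    · intro i
      have hdec := row_decomp Alo Ahi A blo bhi b qA qb x i
      have hUeq : (∑ j, if qA i j then (A i j - (Alo i j + Ahi i j) / 2) * x j else 0)
          - (if qb i then b i - (blo i + bhi i) / 2 else 0) = u i := by
        rw [hu_def]
        congr 1
        · apply Finset.sum_congr rfl
          intro j _
          by_cases hq : qA i j <;> simp [hAdef, hq]
        · by_cases hq : qb i <;> simp [hbdef, hq]
      have hterm : ∀ j ∈ Finset.univ,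
          (if qA i j then 0 else (A i j - (Alo i j + Ahi i j) / 2) * x j)
          = θ i * (if qA i j then 0 else ((Ahi i j - Alo i j) / 2) * |x j|) := by
        intro j _
        by_cases hq : qA i j
        · simp [hq]
        · have e1 : A i j = (Alo i j + Ahi i j) / 2
              + θ i * ((Ahi i j - Alo i j) / 2) * sg (x j) := by simp [hAdef, hq]
          rw [if_neg hq, if_neg hq, e1, ← sg_mul_self (x j)]; ring
      have hWeq : (∑ j, if qA i j then 0 else (A i j - (Alo i j + Ahi i j) / 2) * x j)
          - (if qb i then 0 else b i - (blo i + bhi i) / 2) = v i := by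
        rw [← hθ2 i]
        rw [Finset.sum_congr rfl hterm, ← Finset.mul_sum]
        simp only [hS_def]
        by_cases hq : qb i
        · rw [if_pos hq, if_pos hq]
          ring
        · have e2 : b i = (blo i + bhi i) / 2 - θ i * ((bhi i - blo i) / 2) := by
            simp only [hbdef]; rw [if_neg hq]
          rw [if_neg hq, if_neg hq, e2]
          ring
      rw [hUeq, hWeq] at hdec
      have hceq : (∑ j, ((Alo i j + Ahi i j) / 2) * x j - (blo i + bhi i) / 2) = c i := by
        rw [hc_def]
      rw [hceq] at hdec
      have hui := abs_le.mp (hu' i)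
      rcases hσ : σ i with _ | _ | _
      · have h1 := hineq i
        rw [hσ] at h1
        simp only [IRel.absr] at h1
        have hvv : v i = -(c i + u i) := by simp [hv_def, hσ]
        simp only [hσ, IRel.holds]
        rw [hvv] at hdec
        linarith [hdec]
      · have h1 := hineq i
        rw [hσ] at h1
        simp only [IRel.absr] at h1
        have hvv : v i = S i := by simp [hv_def, hσ]
        simp only [hσ, IRel.holds, ge_iff_le]
        rw [hvv] at hdec
        linarith [hdec, hui.1, h1]
      · have h1 := hineq i
        rw [hσ] at h1
        simp only [IRel.absr] at h1
        have hvv : v i = -(S i) := by simp [hv_def, hσ]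
        simp only [hσ, IRel.holds]
        rw [hvv] at hdec
        linarith [hdec, hui.2, h1]
end

section
/- (Oettli–Prager characterization of weak solutions.) Let (Alo, Ahi) be an interval m×n matrix and (blo, bhi) an interval vector in ℝ^m. For every x ∈ ℝ^n: there exist a matrix A lying in the interval matrix and a vector b lying in the interval vector with Σ_j A_{ij} x_j = b_i for every i, if and only if for every row i, |Σ_j Ǎ_{ij} x_j − b̌_i| ≤ Σ_j Â_{ij} |x_j| + b̂_i. -/
open Finset

theorem stmt13 (m n : ℕ) (Alo Ahi : Matrix (Fin m) (Fin n) ℝ) (blo bhi : Fin m → ℝ)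
    (hA : ∀ i j, Alo i j ≤ Ahi i j) (hb : ∀ i, blo i ≤ bhi i)
    (x : Fin n → ℝ) :
    (∃ A b, memIM Alo Ahi A ∧ memIV blo bhi b ∧ ∀ i, ∑ j, A i j * x j = b i) ↔
    ∀ i, |∑ j, ((Alo i j + Ahi i j) / 2) * x j - (blo i + bhi i) / 2| ≤ (∑ j, ((Ahi i j - Alo i j) / 2) * |x j|) + (bhi i - blo i) / 2 := by
  constructor
  · rintro ⟨A, b, hAm, hbm, heq⟩ i
    have key : ∑ j, ((Alo i j + Ahi i j) / 2) * x j - (blo i + bhi i) / 2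
        = (∑ j, (((Alo i j + Ahi i j) / 2 - A i j) * x j)) + (b i - (blo i + bhi i) / 2) := by
      have hsplit : ∑ j, (((Alo i j + Ahi i j) / 2 - A i j) * x j)
          = (∑ j, ((Alo i j + Ahi i j) / 2) * x j) - ∑ j, A i j * x j := by
        rw [← Finset.sum_sub_distrib]
        exact Finset.sum_congr rfl (fun j _ => by ring)
      rw [← heq i, hsplit]
      ring
    rw [key]
    calc |(∑ j, (((Alo i j + Ahi i j) / 2 - A i j) * x j)) + (b i - (blo i + bhi i) / 2)|
        ≤ |∑ j, (((Alo i j + Ahi i j) / 2 - A i j) * x j)| + |b i - (blo i + bhi i) / 2| :=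
          abs_add_le _ _
      _ ≤ (∑ j, |((Alo i j + Ahi i j) / 2 - A i j) * x j|) + |b i - (blo i + bhi i) / 2| := by
          gcongr; exact Finset.abs_sum_le_sum_abs _ _
      _ ≤ (∑ j, ((Ahi i j - Alo i j) / 2) * |x j|) + (bhi i - blo i) / 2 := by
          gcongr with j hj
          · rw [abs_mul]
            gcongr
            rw [abs_le]
            have := (hAm i j).1
            have := (hAm i j).2
            constructor <;> linarith
          · rw [abs_le]
            have := (hbm i).1
            have := (hbm i).2
            constructor <;> linarith
  · intro h
    set g : Fin n → ℝ := fun j => Real.sign (x j) with hg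
    have hgx : ∀ j, g j * x j = |x j| := by
      intro j
      rcases lt_trichotomy (x j) 0 with h0 | h0 | h0
      · simp [hg, Real.sign_of_neg h0, abs_of_neg h0]
      · simp [hg, h0]
      · simp [hg, Real.sign_of_pos h0, abs_of_pos h0]
    have hgabs : ∀ j, |g j| ≤ 1 := by
      intro j
      rcases lt_trichotomy (x j) 0 with h0 | h0 | h0 <;>
        simp [hg, Real.sign_of_neg, Real.sign_of_pos, h0]
    set t : Fin m → ℝ := fun i => (∑ j, ((Ahi i j - Alo i j) / 2) * |x j|) + (bhi i - blo i) / 2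
      with ht
    set r : Fin m → ℝ := fun i => ∑ j, ((Alo i j + Ahi i j) / 2) * x j - (blo i + bhi i) / 2
      with hr
    set s : Fin m → ℝ := fun i => if t i = 0 then 0 else r i / t i with hs
    have habs : ∀ i, |r i| ≤ t i := fun i => h i
    have ht0 : ∀ i, 0 ≤ t i := fun i => le_trans (abs_nonneg _) (habs i)
    have hst : ∀ i, s i * t i = r i := by
      intro i
      by_cases h0 : t i = 0
      · have hri := habs i
        rw [h0] at hri
        have hr0 : r i = 0 := abs_eq_zero.mp (le_antisymm hri (abs_nonneg _))
        simp [hs, h0, hr0]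
      · simp only [hs, h0, if_false]
        exact div_mul_cancel₀ _ h0
    have hsabs : ∀ i, |s i| ≤ 1 := by
      intro i
      by_cases h0 : t i = 0
      · simp [hs, h0]
      · have htpos : 0 < t i := lt_of_le_of_ne (ht0 i) (Ne.symm h0)
        simp only [hs, h0, if_false]
        rw [abs_div, abs_of_pos htpos, div_le_one htpos]
        exact habs i
    refine ⟨fun i j => (Alo i j + Ahi i j) / 2 - s i * g j * ((Ahi i j - Alo i j) / 2),
      fun i => (blo i + bhi i) / 2 + s i * ((bhi i - blo i) / 2), ?_, ?_, ?_⟩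
    · intro i j
      have hb1 : |s i * g j| ≤ 1 := by
        rw [abs_mul]
        calc |s i| * |g j| ≤ 1 * 1 := by
              have := abs_nonneg (s i); have := abs_nonneg (g j)
              exact mul_le_mul (hsabs i) (hgabs j) (abs_nonneg _) zero_le_one
          _ = 1 := one_mul 1
      have hAn : (0:ℝ) ≤ (Ahi i j - Alo i j) / 2 := by linarith [hA i j]
      have h2 : |s i * g j * ((Ahi i j - Alo i j) / 2)| ≤ (Ahi i j - Alo i j) / 2 := by
        rw [abs_mul, abs_of_nonneg hAn]
        calc |s i * g j| * ((Ahi i j - Alo i j) / 2) ≤ 1 * ((Ahi i j - Alo i j) / 2) := by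
              exact mul_le_mul_of_nonneg_right hb1 hAn
          _ = (Ahi i j - Alo i j) / 2 := one_mul _
      rw [abs_le] at h2
      constructor <;> [skip; skip] <;> nlinarith [h2.1, h2.2]
    · intro i
      have hbn : (0:ℝ) ≤ (bhi i - blo i) / 2 := by linarith [hb i]
      have h2 : |s i * ((bhi i - blo i) / 2)| ≤ (bhi i - blo i) / 2 := by
        rw [abs_mul, abs_of_nonneg hbn]
        calc |s i| * ((bhi i - blo i) / 2) ≤ 1 * ((bhi i - blo i) / 2) :=
              mul_le_mul_of_nonneg_right (hsabs i) hbn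
          _ = (bhi i - blo i) / 2 := one_mul _
      rw [abs_le] at h2
      constructor <;> linarith [h2.1, h2.2]
    · intro i
      have expand : ∑ j, ((Alo i j + Ahi i j) / 2 - s i * g j * ((Ahi i j - Alo i j) / 2)) * x j
          = (∑ j, ((Alo i j + Ahi i j) / 2) * x j)
            - s i * ∑ j, ((Ahi i j - Alo i j) / 2) * |x j| := by
        rw [Finset.mul_sum, ← Finset.sum_sub_distrib]
        apply Finset.sum_congr rfl
        intro j _
        rw [← hgx j]
        ring
      rw [expand]
      have key : s i * ((∑ j, ((Ahi i j - Alo i j) / 2) * |x j|) + (bhi i - blo i) / 2)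
          = ∑ j, ((Alo i j + Ahi i j) / 2) * x j - (blo i + bhi i) / 2 := hst i
      linear_combination -key
end

section
/- (Rohn's characterization of tolerable solutions.) Let (Alo, Ahi) be an interval m×n matrix and (blo, bhi) an interval vector in ℝ^m. For every x ∈ ℝ^n: for every matrix A lying in the interval matrix there exists a vector b lying in the interval vector with Σ_j A_{ij} x_j = b_i for every i, if and only if for every row i, |Σ_j Ǎ_{ij} x_j − b̌_i| ≤ b̂_i − Σ_j Â_{ij} |x_j|. -/
open Finset

theorem stmt14 (m n : ℕ) (Alo Ahi : Matrix (Fin m) (Fin n) ℝ) (blo bhi : Fin m → ℝ)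
    (hA : ∀ i j, Alo i j ≤ Ahi i j) (hb : ∀ i, blo i ≤ bhi i)
    (x : Fin n → ℝ) :
    (∀ A, memIM Alo Ahi A →
      ∃ b, memIV blo bhi b ∧ ∀ i, ∑ j, A i j * x j = b i) ↔
    ∀ i, |∑ j, ((Alo i j + Ahi i j) / 2) * x j - (blo i + bhi i) / 2| ≤ (bhi i - blo i) / 2 - (∑ j, ((Ahi i j - Alo i j) / 2) * |x j|) := by
  constructor
  · intro h i
    -- maximizer and minimizer matrices
    set s : Fin n → ℝ := fun j => if 0 ≤ x j then 1 else -1 with hs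
    have hsx : ∀ j, s j * x j = |x j| := by
      intro j
      by_cases hx : 0 ≤ x j
      · simp [hs, hx, abs_of_nonneg hx]
      · simp [hs, hx, abs_of_neg (lt_of_not_ge hx)]
    have hmem : ∀ (σ : ℝ), (σ = 1 ∨ σ = -1) →
        memIM Alo Ahi (fun i' j => (Alo i' j + Ahi i' j) / 2 + ((Ahi i' j - Alo i' j) / 2) * (σ * s j)) := by
      intro σ hσ i' j
      have hhat : 0 ≤ (Ahi i' j - Alo i' j) / 2 := by linarith [hA i' j]
      have hss : σ * s j = 1 ∨ σ * s j = -1 := by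
        rcases hσ with h1 | h1 <;> by_cases hx : 0 ≤ x j <;> simp [hs, hx, h1]
      rcases hss with h1 | h1 <;> dsimp only <;> rw [h1] <;> constructor <;> nlinarith
    have key : ∀ (σ : ℝ), (σ = 1 ∨ σ = -1) →
        blo i ≤ (∑ j, ((Alo i j + Ahi i j) / 2) * x j) + σ * ∑ j, ((Ahi i j - Alo i j) / 2) * |x j| ∧
        (∑ j, ((Alo i j + Ahi i j) / 2) * x j) + σ * ∑ j, ((Ahi i j - Alo i j) / 2) * |x j| ≤ bhi i := by
      intro σ hσ
      obtain ⟨b, hbmem, hbeq⟩ := h _ (hmem σ hσ)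
      have hsum : (∑ j, ((Alo i j + Ahi i j) / 2 + ((Ahi i j - Alo i j) / 2) * (σ * s j)) * x j)
          = (∑ j, ((Alo i j + Ahi i j) / 2) * x j) + σ * ∑ j, ((Ahi i j - Alo i j) / 2) * |x j| := by
        rw [Finset.mul_sum, ← Finset.sum_add_distrib]
        refine Finset.sum_congr rfl fun j _ => ?_
        linear_combination σ * ((Ahi i j - Alo i j) / 2) * hsx j
      have := hbeq i
      rw [hsum] at this
      rw [this]
      exact hbmem i
    obtain ⟨h1, h2⟩ := key 1 (Or.inl rfl)
    obtain ⟨h3, h4⟩ := key (-1) (Or.inr rfl)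
    rw [abs_le]
    constructor <;> linarith
  · intro h A hAmem
    refine ⟨fun i => ∑ j, A i j * x j, fun i => ?_, fun i => rfl⟩
    have hdev : |(∑ j, A i j * x j) - ∑ j, ((Alo i j + Ahi i j) / 2) * x j|
        ≤ ∑ j, ((Ahi i j - Alo i j) / 2) * |x j| := by
      rw [← Finset.sum_sub_distrib]
      refine (Finset.abs_sum_le_sum_abs _ _).trans (Finset.sum_le_sum fun j _ => ?_)
      rw [← sub_mul, abs_mul]
      refine mul_le_mul_of_nonneg_right ?_ (abs_nonneg _)
      rw [abs_le]
      obtain ⟨hl, hr⟩ := hAmem i j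
      constructor <;> linarith
    have habs := h i
    rw [abs_le] at habs hdev
    constructor <;> linarith [habs.1, habs.2, hdev.1, hdev.2]
end

section
/- (Characterization of controllable solutions.) Let (Alo, Ahi) be an interval m×n matrix and (blo, bhi) an interval vector in ℝ^m. For every x ∈ ℝ^n: for every vector b lying in the interval vector there exists a matrix A lying in the interval matrix with Σ_j A_{ij} x_j = b_i for every i, if and only if for every row i, |Σ_j Ǎ_{ij} x_j − b̌_i| ≤ Σ_j Â_{ij} |x_j| − b̂_i. -/
open Finset

lemma sign_mul_self_abs (x : ℝ) : Real.sign x * x = |x| := by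
  rcases lt_trichotomy x 0 with h|h|h
  · rw [Real.sign_of_neg h, abs_of_neg h]; ring
  · simp [h]
  · rw [Real.sign_of_pos h, abs_of_pos h]; ring

lemma abs_sign_le_one (x : ℝ) : |Real.sign x| ≤ 1 := by
  rcases lt_trichotomy x 0 with h|h|h
  · simp [Real.sign_of_neg h]
  · simp [h]
  · simp [Real.sign_of_pos h]

theorem stmt15 (m n : ℕ) (Alo Ahi : Matrix (Fin m) (Fin n) ℝ) (blo bhi : Fin m → ℝ)
    (hA : ∀ i j, Alo i j ≤ Ahi i j) (hb : ∀ i, blo i ≤ bhi i)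
    (x : Fin n → ℝ) :
    (∀ b, memIV blo bhi b →
      ∃ A, memIM Alo Ahi A ∧ ∀ i, ∑ j, A i j * x j = b i) ↔
    ∀ i, |∑ j, ((Alo i j + Ahi i j) / 2) * x j - (blo i + bhi i) / 2| ≤ (∑ j, ((Ahi i j - Alo i j) / 2) * |x j|) - (bhi i - blo i) / 2 := by
  constructor
  · intro h i
    set c := ∑ j, ((Alo i j + Ahi i j) / 2) * x j with hc
    set S := ∑ j, ((Ahi i j - Alo i j) / 2) * |x j| with hS
    set b : Fin m → ℝ := fun k =>
      if (blo k + bhi k) / 2 ≤ ∑ j, ((Alo k j + Ahi k j) / 2) * x j then blo k else bhi k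
      with hbdef
    obtain ⟨A, hAmem, hAx⟩ := h b (by
      intro k
      simp only [hbdef]
      split_ifs
      · exact ⟨le_refl _, hb k⟩
      · exact ⟨hb k, le_refl _⟩)
    have hbound : |b i - c| ≤ S := by
      rw [← hAx i, hc, ← Finset.sum_sub_distrib] at *
      calc |∑ j, (A i j * x j - ((Alo i j + Ahi i j) / 2) * x j)|
          ≤ ∑ j, |A i j * x j - ((Alo i j + Ahi i j) / 2) * x j| :=
            Finset.abs_sum_le_sum_abs _ _
        _ ≤ S := by
            rw [hS]
            apply Finset.sum_le_sum
            intro j _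
            rw [← sub_mul, abs_mul]
            apply mul_le_mul_of_nonneg_right _ (abs_nonneg _)
            rw [abs_le]
            have h1 := (hAmem i j).1
            have h2 := (hAmem i j).2
            constructor <;> linarith
    have hbi : b i = if (blo i + bhi i) / 2 ≤ c then blo i else bhi i := rfl
    rw [abs_le] at hbound
    rw [abs_le]
    split_ifs at hbi with hcase
    · rw [hbi] at hbound
      constructor <;> linarith [hbound.1, hbound.2]
    · rw [hbi] at hbound
      push_neg at hcase
      constructor <;> linarith [hbound.1, hbound.2]
  · intro h b hbmem
    set c : Fin m → ℝ := fun i => ∑ j, ((Alo i j + Ahi i j) / 2) * x j with hcdef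
    set S : Fin m → ℝ := fun i => ∑ j, ((Ahi i j - Alo i j) / 2) * |x j| with hSdef
    set s : Fin m → ℝ := fun i => if S i = 0 then 0 else (b i - c i) / S i with hsdef
    have hSnonneg : ∀ i, 0 ≤ S i := by
      intro i
      apply Finset.sum_nonneg
      intro j _
      exact mul_nonneg (by linarith [hA i j]) (abs_nonneg _)
    have hbc : ∀ i, |b i - c i| ≤ S i := by
      intro i
      have h1 := h i
      have h2 := hbmem i
      rw [abs_le] at h1 ⊢
      constructor <;> linarith [h1.1, h1.2, h2.1, h2.2]
    have hs1 : ∀ i, |s i| ≤ 1 := by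
      intro i
      by_cases hS0 : S i = 0
      · simp [hsdef, hS0]
      · have hSpos : 0 < S i := lt_of_le_of_ne (hSnonneg i) (Ne.symm hS0)
        simp only [hsdef, if_neg hS0]
        rw [abs_div, abs_of_pos hSpos, div_le_one hSpos]
        exact hbc i
    set A : Matrix (Fin m) (Fin n) ℝ := fun i j =>
      (Alo i j + Ahi i j) / 2 + s i * (((Ahi i j - Alo i j) / 2) * Real.sign (x j))
      with hAdef
    have hAmem : memIM Alo Ahi A := by
      intro i j
      have hrad : 0 ≤ (Ahi i j - Alo i j) / 2 := by linarith [hA i j]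
      have key : |s i * (((Ahi i j - Alo i j) / 2) * Real.sign (x j))|
          ≤ (Ahi i j - Alo i j) / 2 := by
        rw [abs_mul, abs_mul, abs_of_nonneg hrad]
        calc |s i| * ((Ahi i j - Alo i j) / 2 * |Real.sign (x j)|)
            ≤ 1 * ((Ahi i j - Alo i j) / 2 * 1) := by
              apply mul_le_mul (hs1 i) _ (by positivity) zero_le_one
              exact mul_le_mul_of_nonneg_left (abs_sign_le_one _) hrad
          _ = (Ahi i j - Alo i j) / 2 := by ring
      rw [abs_le] at key
      have hk1 := key.1
      have hk2 := key.2
      simp only [hAdef]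
      constructor <;> linarith
    refine ⟨A, hAmem, ?_⟩
    intro i
    have hsum : ∑ j, A i j * x j = c i + s i * S i := by
      have hterm : ∀ j ∈ Finset.univ, A i j * x j =
          ((Alo i j + Ahi i j) / 2) * x j
            + s i * (((Ahi i j - Alo i j) / 2) * |x j|) := by
        intro j _
        simp only [hAdef]
        rw [← sign_mul_self_abs (x j)]
        ring
      rw [Finset.sum_congr rfl hterm, Finset.sum_add_distrib, ← Finset.mul_sum]
    by_cases hS0 : S i = 0
    · have hs0 : s i = 0 := by simp [hsdef, hS0]
      rw [hsum, hs0, hS0]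
      have h1 := h i
      have hcS : (∑ j, ((Ahi i j - Alo i j) / 2) * |x j|) = S i := rfl
      rw [hcS, hS0] at h1
      have h2 := hbmem i
      have h3 : |c i - (blo i + bhi i) / 2| ≤ 0 - (bhi i - blo i) / 2 := h1
      have h4 := abs_nonneg (c i - (blo i + bhi i) / 2)
      rw [abs_le] at h3
      linarith [h3.1, h3.2, h2.1, h2.2, hb i]
    · rw [hsum]
      simp only [hsdef, if_neg hS0]
      field_simp
      ring
end

section
/- (Gerlach's characterization of weak solutions of interval inequalities.) Let (Alo, Ahi) be an interval m×n matrix and (blo, bhi) an interval vector in ℝ^m. For every x ∈ ℝ^n: there exist a matrix A lying in the interval matrix and a vector b lying in the interval vector with Σ_j A_{ij} x_j ≤ b_i for every i, if and only if for every row i, Σ_j Ǎ_{ij} x_j − b̌_i ≤ Σ_j Â_{ij} |x_j| + b̂_i. -/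
open Finset

theorem stmt17 (m n : ℕ) (Alo Ahi : Matrix (Fin m) (Fin n) ℝ) (blo bhi : Fin m → ℝ)
    (hA : ∀ i j, Alo i j ≤ Ahi i j) (hb : ∀ i, blo i ≤ bhi i)
    (x : Fin n → ℝ) :
    (∃ A b, memIM Alo Ahi A ∧ memIV blo bhi b ∧ ∀ i, ∑ j, A i j * x j ≤ b i) ↔
    ∀ i, (∑ j, ((Alo i j + Ahi i j) / 2) * x j - (blo i + bhi i) / 2) ≤ (∑ j, ((Ahi i j - Alo i j) / 2) * |x j|) + (bhi i - blo i) / 2 := by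
  constructor
  · rintro ⟨A, b, hAm, hbm, hle⟩ i
    have key : ∑ j, (((Alo i j + Ahi i j) / 2) * x j - ((Ahi i j - Alo i j) / 2) * |x j|)
        ≤ ∑ j, A i j * x j := by
      apply Finset.sum_le_sum
      intro j _
      rcases abs_cases (x j) with ⟨h, hx⟩ | ⟨h, hx⟩ <;> rw [h] <;>
        nlinarith [(hAm i j).1, (hAm i j).2]
    rw [Finset.sum_sub_distrib] at key
    have := hle i
    have := (hbm i).2
    linarith
  · intro h
    refine ⟨fun i j => if 0 ≤ x j then Alo i j else Ahi i j, bhi, ?_, ?_, ?_⟩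
    · intro i j
      dsimp only
      split
      · exact ⟨le_rfl, hA i j⟩
      · exact ⟨hA i j, le_rfl⟩
    · intro i; exact ⟨hb i, le_rfl⟩
    · intro i
      have heq : ∀ j ∈ Finset.univ, (if 0 ≤ x j then Alo i j else Ahi i j) * x j
          = ((Alo i j + Ahi i j) / 2) * x j - ((Ahi i j - Alo i j) / 2) * |x j| := by
        intro j _
        split
        next hx => rw [abs_of_nonneg hx]; ring
        next hx => rw [abs_of_neg (lt_of_not_ge hx)]; ring
      rw [Finset.sum_congr rfl heq, Finset.sum_sub_distrib]
      have := h i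
      linarith
end

section
/- (Characterization of tolerable solutions of interval inequalities A x ≥ b.) Let (Alo, Ahi) be an interval m×n matrix and (blo, bhi) an interval vector in ℝ^m. For every x ∈ ℝ^n: for every matrix A lying in the interval matrix there exists a vector b lying in the interval vector with Σ_j A_{ij} x_j ≥ b_i for every i, if and only if for every row i, Σ_j min(Alo_{ij} x_j, Ahi_{ij} x_j) ≥ blo_i. -/
open Finset

theorem stmt19 (m n : ℕ) (Alo Ahi : Matrix (Fin m) (Fin n) ℝ) (blo bhi : Fin m → ℝ)
    (hA : ∀ i j, Alo i j ≤ Ahi i j) (hb : ∀ i, blo i ≤ bhi i)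
    (x : Fin n → ℝ) :
    (∀ A, memIM Alo Ahi A →
      ∃ b, memIV blo bhi b ∧ ∀ i, ∑ j, A i j * x j ≥ b i) ↔
    ∀ i, (∑ j, min (Alo i j * x j) (Ahi i j * x j)) ≥ blo i := by
  constructor
  · intro h i
    set A : Matrix (Fin m) (Fin n) ℝ := fun i j => if 0 ≤ x j then Alo i j else Ahi i j with hAdef
    have hmem : memIM Alo Ahi A := by
      intro i j
      simp only [hAdef]
      split <;> exact ⟨by simp [hA i j], by simp [hA i j]⟩
    obtain ⟨b, hbmem, hge⟩ := h A hmem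
    have key : ∀ j, A i j * x j = min (Alo i j * x j) (Ahi i j * x j) := by
      intro j
      simp only [hAdef]
      rcases le_or_gt 0 (x j) with hx | hx
      · rw [if_pos hx, min_eq_left (mul_le_mul_of_nonneg_right (hA i j) hx)]
      · rw [if_neg (not_le.mpr hx), min_eq_right (mul_le_mul_of_nonpos_right (hA i j) hx.le)]
    calc (∑ j, min (Alo i j * x j) (Ahi i j * x j)) = ∑ j, A i j * x j := by
            simp_rw [key]
      _ ≥ b i := hge i
      _ ≥ blo i := (hbmem i).1
  · intro h A hmem
    refine ⟨blo, fun i => ⟨le_rfl, hb i⟩, fun i => ?_⟩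
    calc (∑ j, A i j * x j) ≥ ∑ j, min (Alo i j * x j) (Ahi i j * x j) := by
            apply Finset.sum_le_sum
            intro j _
            rcases le_or_gt 0 (x j) with hx | hx
            · exact le_trans (min_le_left _ _) (mul_le_mul_of_nonneg_right (hmem i j).1 hx)
            · exact le_trans (min_le_right _ _) (mul_le_mul_of_nonpos_right (hmem i j).2 hx.le)
      _ ≥ blo i := h i
end
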